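/- arXiv:1205.4648 — 5 statements merged into one kernel-verified Lean document; each statement's English description precedes it below -/
import Mathlib

section
/- Let X be a polyhedral cell complex in ℝ^n of dimension k ≥ 1 such that |X|, the union of all members of X, is a convex set (hence a convex polytope). Let τ ∈ X_{k−1}. If τ is contained in the relative boundary of |X| (the boundary of |X| within its affine hull), then there is exactly one face σ ∈ X_k such that τ is a facet of σ. If τ is not contained in the relative boundary of |X|, then there are exactly two faces σ₁, σ₂ ∈ X_k such that τ is a facet of σ₁ and of σ₂. -/
open Set

noncomputable section

set_option maxHeartbeats 1000000

abbrev Euc (n : ℕ) : Type := EuclideanSpace ℝ (Fin n)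

/-- A polytope is the convex hull of a finite set of points. -/
def IsPolytope {n : ℕ} (P : Set (Euc n)) : Prop :=
  ∃ s : Finset (Euc n), P = convexHull ℝ (s : Set (Euc n))

/-- A face of a polytope: the intersection of `P` with a supporting hyperplane. -/
def IsFaceOf {n : ℕ} (F P : Set (Euc n)) : Prop :=
  ∃ (f : Euc n →ₗ[ℝ] ℝ) (c : ℝ), (∀ x ∈ P, f x ≤ c) ∧ F = {x ∈ P | f x = c}

/-- The dimension of a polytope: the dimension of its affine hull. -/
def polyDim {n : ℕ} (P : Set (Euc n)) : ℕ :=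
  Module.finrank ℝ ↥(vectorSpan ℝ P)

/-- A facet of a `k`-dimensional polytope is a face of dimension `k - 1`. -/
def IsFacetOf {n : ℕ} (τ σ : Set (Euc n)) : Prop :=
  IsFaceOf τ σ ∧ polyDim τ + 1 = polyDim σ

/-- A polyhedral cell complex in `ℝⁿ`. -/
structure PolyComplex (n : ℕ) where
  faces : Set (Set (Euc n))
  finite : faces.Finite
  nonempty : ∀ P ∈ faces, P.Nonempty
  isPolytope : ∀ P ∈ faces, IsPolytope P
  face_mem : ∀ P ∈ faces, ∀ F, IsFaceOf F P → F.Nonempty → F ∈ faces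
  inter_face : ∀ P ∈ faces, ∀ Q ∈ faces, (P ∩ Q).Nonempty →
    IsFaceOf (P ∩ Q) P ∧ IsFaceOf (P ∩ Q) Q

/-- `X_k`: the members of `X` of dimension `k`. -/
def PolyComplex.cells {n : ℕ} (X : PolyComplex n) (k : ℕ) : Set (Set (Euc n)) :=
  {σ ∈ X.faces | polyDim σ = k}

/-- `|X|`: the union of all members of `X`. -/
def PolyComplex.support {n : ℕ} (X : PolyComplex n) : Set (Euc n) :=
  ⋃₀ X.faces

lemma polyDim_mono {n : ℕ} {s t : Set (Euc n)} (h : s ⊆ t) : polyDim s ≤ polyDim t :=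
  Submodule.finrank_mono (vectorSpan_mono ℝ h)

lemma affineSpan_eq_of_le_dim {n : ℕ} {s t : Set (Euc n)} (hne : s.Nonempty)
    (hsub : s ⊆ t) (hdim : polyDim t ≤ polyDim s) : affineSpan ℝ s = affineSpan ℝ t := by
  have hvs : vectorSpan ℝ s = vectorSpan ℝ t :=
    Submodule.eq_of_le_of_finrank_le (vectorSpan_mono ℝ hsub) hdim
  refine AffineSubspace.ext_of_direction_eq ?_ ?_
  · rw [direction_affineSpan, direction_affineSpan, hvs]
  · obtain ⟨x, hx⟩ := hne
    exact ⟨x, subset_affineSpan ℝ s hx, subset_affineSpan ℝ t (hsub hx)⟩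

lemma IsPolytope.convex {n : ℕ} {P : Set (Euc n)} (h : IsPolytope P) : Convex ℝ P := by
  obtain ⟨s, rfl⟩ := h; exact convex_convexHull ℝ _

lemma IsPolytope.isClosed {n : ℕ} {P : Set (Euc n)} (h : IsPolytope P) : IsClosed P := by
  obtain ⟨s, rfl⟩ := h; exact (s.finite_toSet.isCompact_convexHull ℝ).isClosed

lemma eq_on_affine_of_relBall {n : ℕ} (g : Euc n →ₗ[ℝ] ℝ) (c : ℝ)
    (A : AffineSubspace ℝ (Euc n)) {z : Euc n} (hz : z ∈ A) {r : ℝ} (hr : 0 < r)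
    (h : ∀ y ∈ A, dist y z < r → g y = c) : ∀ y ∈ A, g y = c := by
  intro y hy
  rcases eq_or_ne y z with rfl | hne
  · exact h y hy (by simpa using hr)
  have hd : (0:ℝ) < dist y z := dist_pos.2 hne
  set t : ℝ := r / (2 * dist y z) with ht
  have htpos : 0 < t := div_pos hr (by positivity)
  set u : Euc n := t • (y -ᵥ z) +ᵥ z with hu
  have huz : u - z = t • (y - z) := by simp [hu]
  have htd : t * dist y z = r / 2 := by rw [ht, div_mul_eq_mul_div, div_eq_div_iff (by positivity) (by norm_num)]; ring
  have hdu : dist u z < r := by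
    have h1 : dist u z = t * dist y z := by
      rw [dist_eq_norm, huz, norm_smul, Real.norm_eq_abs, abs_of_pos htpos, ← dist_eq_norm]
    rw [h1, htd]; linarith
  have huA : u ∈ A := A.smul_vsub_vadd_mem t hy hz hz
  have hgu : g u = c := h u huA hdu
  have hgz : g z = c := h z hz (by simpa using hr)
  have hlin : g u = g z + t * (g y - g z) := by
    have h2 : u = z + t • (y - z) := by
      have := huz; rw [sub_eq_iff_eq_add] at this; rw [this]; abel
    rw [h2]; simp
  rw [hgu, hgz] at hlin
  have h3 : t * (g y - c) = 0 := by linarith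
  rcases mul_eq_zero.1 h3 with h' | h'
  · exact absurd h' (ne_of_gt htpos)
  · linarith

lemma mem_intrinsicInterior_iff' {n : ℕ} {s : Set (Euc n)} {x : Euc n} :
    x ∈ intrinsicInterior ℝ s ↔
      x ∈ s ∧ ∃ ε > 0, ∀ y ∈ affineSpan ℝ s, dist y x < ε → y ∈ s := by
  constructor
  · intro hx
    refine ⟨intrinsicInterior_subset hx, ?_⟩
    obtain ⟨x', hx', rfl⟩ := hx
    rw [mem_interior_iff_mem_nhds, Metric.mem_nhds_iff] at hx'
    obtain ⟨ε, hε, hball⟩ := hx'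
    refine ⟨ε, hε, fun y hy hdy => ?_⟩
    have : (⟨y, hy⟩ : affineSpan ℝ s) ∈ Metric.ball x' ε := by
      rw [Metric.mem_ball, Subtype.dist_eq]; exact hdy
    exact hball this
  · rintro ⟨hxs, ε, hε, hball⟩
    have hxA : x ∈ affineSpan ℝ s := subset_affineSpan ℝ s hxs
    refine ⟨⟨x, hxA⟩, ?_, rfl⟩
    rw [mem_interior_iff_mem_nhds, Metric.mem_nhds_iff]
    refine ⟨ε, hε, fun y hy => ?_⟩
    rw [Metric.mem_ball, Subtype.dist_eq] at hy
    exact hball y y.2 hy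

/-- If a set `C` contains a relative ball of an affine subspace, then the affine
subspace is contained in the affine span of `C`. -/
lemma le_affineSpan_of_relBall {n : ℕ} {C : Set (Euc n)} {A : AffineSubspace ℝ (Euc n)}
    {x' : Euc n} (hx' : x' ∈ A) {r : ℝ} (hr : 0 < r)
    (h : ∀ y ∈ A, dist y x' < r → y ∈ C) : ∀ y ∈ A, y ∈ affineSpan ℝ C := by
  intro y hy
  rcases eq_or_ne y x' with rfl | hne
  · exact subset_affineSpan ℝ C (h y hy (by simpa using hr))
  have hd : (0:ℝ) < dist y x' := dist_pos.2 hne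
  set t : ℝ := r / (2 * dist y x') with ht
  have htpos : 0 < t := div_pos hr (by positivity)
  set u : Euc n := t • (y -ᵥ x') +ᵥ x' with hu
  have huA : u ∈ A := A.smul_vsub_vadd_mem t hy hx' hx'
  have htd : t * dist y x' = r / 2 := by rw [ht, div_mul_eq_mul_div, div_eq_div_iff (by positivity) (by norm_num)]; ring
  have hdu : dist u x' < r := by
    have h1 : dist u x' = t * dist y x' := by
      have huz : u - x' = t • (y - x') := by simp [hu]
      rw [dist_eq_norm, huz, norm_smul, Real.norm_eq_abs, abs_of_pos htpos, ← dist_eq_norm]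
    rw [h1, htd]; linarith
  have huC : u ∈ affineSpan ℝ C := subset_affineSpan ℝ C (h u huA hdu)
  have hx'C : x' ∈ affineSpan ℝ C := subset_affineSpan ℝ C (h x' hx' (by simpa using hr))
  have : y = t⁻¹ • (u -ᵥ x') +ᵥ x' := by
    have huz : u - x' = t • (y - x') := by simp [hu]
    simp only [vsub_eq_sub, vadd_eq_add, huz, smul_smul, inv_mul_cancel₀ (ne_of_gt htpos),
      one_smul]
    abel
  rw [this]
  exact (affineSpan ℝ C).smul_vsub_vadd_mem t⁻¹ huC hx'C hx'C

/-- A finite family of closed sets covering a relative ball: one member contains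
a (smaller) relative ball. Here `A` is an arbitrary ambient set. -/
lemma exists_relBall_subset {n : ℕ} (A : Set (Euc n)) :
    ∀ (F : Finset (Set (Euc n))), (∀ C ∈ F, IsClosed C) →
    ∀ x ∈ A, ∀ r : ℝ, 0 < r → ({y ∈ A | dist y x < r} ⊆ ⋃₀ ↑F) →
    ∃ C ∈ F, ∃ x' ∈ A, ∃ r' : ℝ, 0 < r' ∧ {y ∈ A | dist y x' < r'} ⊆ C := by
  intro F
  classical
  induction F using Finset.strongInduction with
  | _ F ih =>
    intro hcl x hx r hr hcov
    rcases F.eq_empty_or_nonempty with rfl | ⟨C, hC⟩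
    · exact absurd (hcov ⟨hx, by simpa using hr⟩) (by simp)
    by_cases hsub : {y ∈ A | dist y x < r} ⊆ C
    · exact ⟨C, hC, x, hx, r, hr, hsub⟩
    · skip
      obtain ⟨u, ⟨huA, hud⟩, huC⟩ := ((Set.not_subset).1 hsub)
      obtain ⟨ρ, hρ, hball⟩ := Metric.mem_nhds_iff.1 ((hcl C hC).isOpen_compl.mem_nhds huC)
      set r' := min ρ (r - dist u x) with hr'
      have hr'pos : 0 < r' := lt_min hρ (by linarith)
      have hcov' : {y ∈ A | dist y u < r'} ⊆ ⋃₀ ↑(F.erase C) := by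
        intro y ⟨hyA, hyd⟩
        have hyr : dist y x < r := by
          calc dist y x ≤ dist y u + dist u x := dist_triangle _ _ _
          _ < r' + dist u x := by linarith
          _ ≤ (r - dist u x) + dist u x := by have := min_le_right ρ (r - dist u x); linarith
          _ = r := by ring
        obtain ⟨D, hD, hyD⟩ := hcov ⟨hyA, hyr⟩
        refine ⟨D, Finset.mem_erase.2 ⟨?_, hD⟩, hyD⟩
        rintro rfl
        exact hball (Metric.mem_ball.2 (lt_of_lt_of_le hyd (min_le_left _ _))) hyD
      obtain ⟨D, hD, rest⟩ := ih (F.erase C) (Finset.erase_ssubset hC)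
        (fun D hD => hcl D (Finset.mem_of_mem_erase hD)) u huA r' hr'pos hcov'
      exact ⟨D, Finset.mem_of_mem_erase hD, rest⟩

/-- A face of a polytope containing a point of the intrinsic interior is the whole polytope. -/
lemma face_eq_of_relint {n : ℕ} {F τ : Set (Euc n)} (hF : IsFaceOf F τ) {x : Euc n}
    (hxF : x ∈ F) (hx : x ∈ intrinsicInterior ℝ τ) : F = τ := by
  obtain ⟨f, c, hfle, rfl⟩ := hF
  obtain ⟨hxτ, ε, hε, hball⟩ := mem_intrinsicInterior_iff'.1 hx
  have hfx : f x = c := hxF.2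
  have key : ∀ y ∈ τ, f y = c := by
    intro y hy
    rcases eq_or_ne y x with rfl | hne
    · exact hfx
    have hd : (0:ℝ) < dist x y := dist_pos.2 (Ne.symm hne)
    set t : ℝ := ε / (2 * dist x y) with ht
    have htpos : 0 < t := div_pos hε (by positivity)
    set u : Euc n := t • (x -ᵥ y) +ᵥ x with hu
    have huA : u ∈ affineSpan ℝ τ :=
      (affineSpan ℝ τ).smul_vsub_vadd_mem t (subset_affineSpan ℝ τ hxτ)
        (subset_affineSpan ℝ τ hy) (subset_affineSpan ℝ τ hxτ)
    have htd : t * dist x y = ε / 2 := by rw [ht, div_mul_eq_mul_div, div_eq_div_iff (by positivity) (by norm_num)]; ring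
    have hdu : dist u x < ε := by
      have h1 : dist u x = t * dist x y := by
        have huz : u - x = t • (x - y) := by simp [hu]
        rw [dist_eq_norm, huz, norm_smul, Real.norm_eq_abs, abs_of_pos htpos, ← dist_eq_norm]
      rw [h1, htd]; linarith
    have huτ : u ∈ τ := hball u huA hdu
    have hfu : f u ≤ c := hfle u huτ
    have hlin : f u = c + t * (c - f y) := by
      have h2 : u = x + t • (x - y) := by
        have huz : u - x = t • (x - y) := by simp [hu]
        rw [sub_eq_iff_eq_add] at huz; rw [huz]; abel
      rw [h2]; simp [hfx]
    nlinarith [hfle y hy]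
  ext y; constructor
  · rintro ⟨hy, _⟩; exact hy
  · intro hy; exact ⟨hy, key y hy⟩

lemma aux_sign_neg {q p m : ℝ} (hp : 0 < p) (hm : m < 0) (h : q / p * m ≤ 0) : 0 ≤ q := by
  by_contra h7
  push_neg at h7
  have : 0 < q / p * m := mul_pos_of_neg_of_neg (div_neg_of_neg_of_pos h7 hp) hm
  linarith

lemma aux_sign_pos {q p m : ℝ} (hp : 0 < p) (hm : 0 < m) (h : q / p * m ≤ 0) : q ≤ 0 := by
  by_contra h7
  push_neg at h7
  have : 0 < q / p * m := mul_pos (div_pos h7 hp) hm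
  linarith

lemma aux_sign_zero {q p m : ℝ} (hp : 0 < p) (hm : m ≠ 0) (h : q / p * m = 0) : q = 0 := by
  rcases mul_eq_zero.1 h with h' | h'
  · rcases div_eq_zero_iff.1 h' with h'' | h''
    · exact h''
    · exact absurd h'' (ne_of_gt hp)
  · exact absurd h' hm

lemma sign_lemma {n : ℕ} {τ σ : Set (Euc n)} {x v' : Euc n} (V : Submodule ℝ (Euc n))
    (hτσ : τ ⊆ σ) (hσA : ∀ y ∈ σ, y - x ∈ V)
    (hVW : ∀ z ∈ V, ((inner ℝ v' z : ℝ) = 0 ↔ z ∈ vectorSpan ℝ τ))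
    (hv' : v' ∈ V) (hv'0 : v' ≠ 0) (hτx : x ∈ τ)
    (hne : τ ≠ σ) (hface : IsFaceOf τ σ) :
    ∃ e : ℝ, (e = 1 ∨ e = -1) ∧ (∀ y ∈ σ, 0 ≤ e * (inner ℝ v' (y - x) : ℝ)) ∧
      (∀ y ∈ σ, (inner ℝ v' (y - x) : ℝ) = 0 → y ∈ τ) ∧
      (∃ w ∈ σ, 0 < e * (inner ℝ v' (w - x) : ℝ)) := by
  obtain ⟨g, c, hg, heq⟩ := hface
  have hτmem : ∀ y ∈ τ, y ∈ σ ∧ g y = c := by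
    intro y hy; rw [heq] at hy; exact ⟨hy.1, hy.2⟩
  have hgx : g x = c := (hτmem x hτx).2
  have hmem' : ∀ y ∈ σ, g y = c → y ∈ τ := by
    intro y h1 h2; rw [heq]; exact ⟨h1, h2⟩
  have hgW : ∀ w ∈ vectorSpan ℝ τ, g w = 0 := by
    have hle : vectorSpan ℝ τ ≤ LinearMap.ker g := by
      rw [vectorSpan_def, Submodule.span_le]
      rintro z ⟨u, hu, v, hv, rfl⟩
      have h1 : g (u -ᵥ v) = g u - g v := by simp
      rw [SetLike.mem_coe, LinearMap.mem_ker, h1, (hτmem u hu).2, (hτmem v hv).2, sub_self]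
    intro w hw; exact LinearMap.mem_ker.1 (hle hw)
  have hfv' : (0:ℝ) < inner ℝ v' v' := by
    rw [real_inner_self_eq_norm_sq]
    exact pow_pos (norm_pos_iff.2 hv'0) 2
  have hdec : ∀ z ∈ V, g z = ((inner ℝ v' z : ℝ) / (inner ℝ v' v' : ℝ)) * g v' := by
    intro z hz
    set s : ℝ := (inner ℝ v' z : ℝ) / (inner ℝ v' v' : ℝ) with hs
    have hzs : z - s • v' ∈ vectorSpan ℝ τ := by
      rw [← hVW _ (Submodule.sub_mem V hz (Submodule.smul_mem V s hv'))]
      rw [inner_sub_right, real_inner_smul_right, hs,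
        div_mul_cancel₀ _ (ne_of_gt hfv'), sub_self]
    have h0 : g (z - s • v') = 0 := hgW _ hzs
    have h1 : g (z - s • v') = g z - s * g v' := by simp
    rw [h1] at h0; linarith
  have hgval : ∀ y ∈ σ, g y - c = ((inner ℝ v' (y - x) : ℝ) / (inner ℝ v' v' : ℝ)) * g v' := by
    intro y hy
    have h1 : g (y - x) = g y - g x := by simp
    have h2 := hdec (y - x) (hσA y hy)
    rw [h1, hgx] at h2; exact h2
  have hex : ∃ w ∈ σ, w ∉ τ := by
    by_contra hcon
    push_neg at hcon
    exact hne (Set.Subset.antisymm hτσ hcon)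
  obtain ⟨w, hwσ, hwτ⟩ := hex
  rcases lt_trichotomy (g v') 0 with hgv | hgv | hgv
  · refine ⟨1, Or.inl rfl, ?_, ?_, ?_⟩
    · intro y hy
      rw [one_mul]
      exact aux_sign_neg hfv' hgv (by linarith [hgval y hy, hg y hy])
    · intro y hy h0
      apply hmem' y hy
      have h2 := hgval y hy
      rw [h0, zero_div, zero_mul] at h2; linarith
    · refine ⟨w, hwσ, ?_⟩
      rw [one_mul]
      have h4 : 0 ≤ (inner ℝ v' (w - x) : ℝ) :=
        aux_sign_neg hfv' hgv (by linarith [hgval w hwσ, hg w hwσ])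
      rcases lt_or_eq_of_le h4 with h5 | h5
      · exact h5
      · exact absurd (hmem' w hwσ (by have h2 := hgval w hwσ; rw [← h5, zero_div, zero_mul] at h2; linarith)) hwτ
  · exfalso
    apply hne
    apply Set.Subset.antisymm hτσ
    intro y hy
    apply hmem' y hy
    have h2 := hgval y hy
    rw [hgv, mul_zero] at h2; linarith
  · refine ⟨-1, Or.inr rfl, ?_, ?_, ?_⟩
    · intro y hy
      have h4 : (inner ℝ v' (y - x) : ℝ) ≤ 0 :=
        aux_sign_pos hfv' hgv (by linarith [hgval y hy, hg y hy])
      linarith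
    · intro y hy h0
      apply hmem' y hy
      have h2 := hgval y hy
      rw [h0, zero_div, zero_mul] at h2; linarith
    · refine ⟨w, hwσ, ?_⟩
      have h4 : (inner ℝ v' (w - x) : ℝ) ≤ 0 :=
        aux_sign_pos hfv' hgv (by linarith [hgval w hwσ, hg w hwσ])
      rcases lt_or_eq_of_le h4 with h5 | h5
      · linarith
      · exact absurd (hmem' w hwσ (by have h2 := hgval w hwσ; rw [h5, zero_div, zero_mul] at h2; linarith)) hwτ

lemma halfball_lemma {n : ℕ} {τ σ : Set (Euc n)} {x v' : Euc n} {A : AffineSubspace ℝ (Euc n)}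
    (hσconv : Convex ℝ σ) (hτσ : τ ⊆ σ)
    (hxA : x ∈ A) (hσA : σ ⊆ (A : Set (Euc n))) (hv'0 : v' ≠ 0)
    {ετ : ℝ} (hετ : 0 < ετ)
    (hH : ∀ y ∈ A, (inner ℝ v' (y - x) : ℝ) = 0 → dist y x < ετ → y ∈ τ)
    {e : ℝ} (he : e = 1 ∨ e = -1)
    (hsgn : ∀ y ∈ σ, 0 ≤ e * (inner ℝ v' (y - x) : ℝ))
    {w : Euc n} (hw : w ∈ σ) (hwpos : 0 < e * (inner ℝ v' (w - x) : ℝ)) :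
    ∃ δ, 0 < δ ∧ ∀ y ∈ A, dist y x < δ → 0 ≤ e * (inner ℝ v' (y - x) : ℝ) → y ∈ σ := by
  have he2 : e * e = 1 := by rcases he with rfl | rfl <;> norm_num
  have hv'pos : (0:ℝ) < ‖v'‖ := norm_pos_iff.2 hv'0
  set β : ℝ := e * (inner ℝ v' (w - x) : ℝ) with hβ
  have hβpos : 0 < β := hwpos
  set D : ℝ := ‖w - x‖ with hD
  have hDnn : 0 ≤ D := norm_nonneg _
  set M : ℝ := 2 + 2 * ‖v'‖ * (D + 1) / β with hM
  have hM2 : 2 ≤ M := by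
    have h0 : 0 ≤ 2 * ‖v'‖ * (D + 1) / β := by positivity
    rw [hM]; linarith
  have hMpos : 0 < M := by linarith
  refine ⟨min (ετ / M) (β / (2 * (‖v'‖ + 1))), lt_min (by positivity) (by positivity), ?_⟩
  intro y hyA hdy ha
  set δ : ℝ := min (ετ / M) (β / (2 * (‖v'‖ + 1))) with hδ
  have hδpos : 0 < δ := lt_min (by positivity) (by positivity)
  set fy : ℝ := (inner ℝ v' (y - x) : ℝ) with hfy
  set a : ℝ := e * fy with ha'
  have hδετ : δ ≤ ετ / 2 := by
    have h1 : δ ≤ ετ / M := min_le_left _ _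
    have h2 : ετ / M ≤ ετ / 2 := by
      apply div_le_div_of_nonneg_left (le_of_lt hετ) (by norm_num) hM2
    linarith
  rcases eq_or_lt_of_le ha with ha0 | hapos
  · -- on the hyperplane: y ∈ τ
    have hfy0 : fy = 0 := by
      have h0 : fy = e * a := by rw [ha', ← mul_assoc, he2, one_mul]
      rw [h0, ← ha0, mul_zero]
    exact hτσ (hH y hyA hfy0 (by linarith))
  · -- strictly off the hyperplane
    set t : ℝ := a / β with ht
    have htpos : 0 < t := div_pos hapos hβpos
    have hn1 : ‖y - x‖ < δ := by rw [← dist_eq_norm]; exact hdy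
    have ha2 : a ≤ ‖v'‖ * ‖y - x‖ := by
      have h1 : a ≤ |fy| := by
        rcases he with rfl | rfl
        · rw [ha', one_mul]; exact le_abs_self _
        · rw [ha', neg_one_mul]; exact neg_le_abs _
      calc a ≤ |fy| := h1
        _ ≤ ‖v'‖ * ‖y - x‖ := abs_real_inner_le_norm _ _
    have ha3 : a < ‖v'‖ * δ := by
      calc a ≤ ‖v'‖ * ‖y - x‖ := ha2
        _ < ‖v'‖ * δ := by exact mul_lt_mul_of_pos_left hn1 hv'pos
    have ht3 : t * β = a := div_mul_cancel₀ _ (ne_of_gt hβpos)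
    have ht4 : t < ‖v'‖ * δ / β := (lt_div_iff₀ hβpos).2 (by linarith)
    have ht2 : t < 1 / 2 := by
      have hδ2 : δ ≤ β / (2 * (‖v'‖ + 1)) := min_le_right _ _
      have h5 : δ * (2 * (‖v'‖ + 1)) ≤ β := by
        rw [← le_div_iff₀ (by positivity)]; exact hδ2
      nlinarith [ht3, ha3, mul_pos hδpos hv'pos]
    have h1t : (0:ℝ) < 1 - t := by linarith
    set u : Euc n := x + (1 - t)⁻¹ • ((y - x) - t • (w - x)) with hu
    have hux : u - x = (1 - t)⁻¹ • ((y - x) - t • (w - x)) := by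
      rw [hu]; abel
    have hfw : (inner ℝ v' (w - x) : ℝ) = e * β := by
      rw [hβ, ← mul_assoc, he2, one_mul]
    have hfu : (inner ℝ v' (u - x) : ℝ) = 0 := by
      rw [hux, real_inner_smul_right, inner_sub_right, real_inner_smul_right, hfw]
      have h8 : t * (e * β) = fy := by
        rw [ht, ha']
        rw [div_mul_eq_mul_div, div_eq_iff (ne_of_gt hβpos)]
        linear_combination (fy * β) * he2
      rw [← hfy, h8]; ring
    have huA : u ∈ A := by
      have hd1 : y -ᵥ x ∈ A.direction := AffineSubspace.vsub_mem_direction hyA hxA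
      have hd2 : w -ᵥ x ∈ A.direction := AffineSubspace.vsub_mem_direction (hσA hw) hxA
      have hd3 : u -ᵥ x ∈ A.direction := by
        have : u -ᵥ x = (1 - t)⁻¹ • ((y -ᵥ x) - t • (w -ᵥ x)) := hux
        rw [this]
        exact Submodule.smul_mem _ _ (Submodule.sub_mem _ hd1 (Submodule.smul_mem _ _ hd2))
      exact (AffineSubspace.vsub_right_mem_direction_iff_mem hxA u).1 hd3
    have hdux : dist u x < ετ := by
      have hstep1 : ‖(y - x) - t • (w - x)‖ ≤ ‖y - x‖ + t * D := by
        calc ‖(y - x) - t • (w - x)‖ ≤ ‖y - x‖ + ‖t • (w - x)‖ := norm_sub_le _ _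
          _ = ‖y - x‖ + t * D := by rw [norm_smul, Real.norm_eq_abs, abs_of_pos htpos, hD]
      have hinv2 : (1 - t)⁻¹ ≤ 2 := by
        rw [show (2:ℝ) = (1/2 : ℝ)⁻¹ by norm_num]
        exact inv_anti₀ (by norm_num) (by linarith)
      have hstep2 : dist u x ≤ 2 * (‖y - x‖ + t * D) := by
        rw [dist_eq_norm, hux, norm_smul, Real.norm_eq_abs, abs_of_pos (by positivity : (0:ℝ) < (1-t)⁻¹)]
        have hnn : 0 ≤ ‖y - x‖ + t * D := by positivity
        calc (1 - t)⁻¹ * ‖(y - x) - t • (w - x)‖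
            ≤ (1 - t)⁻¹ * (‖y - x‖ + t * D) := by
              exact mul_le_mul_of_nonneg_left hstep1 (by positivity)
          _ ≤ 2 * (‖y - x‖ + t * D) := mul_le_mul_of_nonneg_right hinv2 hnn
      have htD : t * D ≤ (‖v'‖ * δ / β) * (D + 1) := by
        apply mul_le_mul (le_of_lt ht4) (by linarith) hDnn (by positivity)
      have hδM : δ * M ≤ ετ := by
        have h9 : δ ≤ ετ / M := min_le_left _ _
        calc δ * M ≤ (ετ / M) * M := mul_le_mul_of_nonneg_right h9 (le_of_lt hMpos)
          _ = ετ := div_mul_cancel₀ _ (ne_of_gt hMpos)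
      have hid2 : δ * M = δ * 2 + 2 * ((‖v'‖ * δ / β) * (D + 1)) := by rw [hM]; ring
      clear_value β D M δ fy a t u
      linarith [hid2, hn1, htD, hδM, hstep2]
    have hu_τ : u ∈ τ := hH u huA hfu hdux
    have hy_eq : y = (1 - t) • u + t • w := by
      have hcan : (1 - t) • ((1 - t)⁻¹ • ((y - x) - t • (w - x))) = (y - x) - t • (w - x) :=
        smul_inv_smul₀ (ne_of_gt h1t) _
      rw [hu, smul_add, hcan]
      module
    rw [hy_eq]
    exact hσconv (hτσ hu_τ) hw (by linarith) (le_of_lt htpos) (by ring)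


lemma central {n k : ℕ} (hk : 1 ≤ k) (X : PolyComplex n)
    (hdim_le : ∀ σ ∈ X.faces, polyDim σ ≤ k)
    (hdim_eq : ∃ σ ∈ X.faces, polyDim σ = k)
    (hconv : Convex ℝ X.support)
    (τ : Set (Euc n)) (hτ : τ ∈ X.cells (k - 1))
    {x : Euc n} (hx : x ∈ intrinsicInterior ℝ τ) :
    (∃ σ, σ ∈ X.cells k ∧ τ ⊆ σ) ∧
    (∀ σ₁ σ₂, σ₁ ∈ X.cells k → σ₂ ∈ X.cells k → τ ⊆ σ₁ → τ ⊆ σ₂ → σ₁ ≠ σ₂ →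
      x ∈ intrinsicInterior ℝ X.support) ∧
    (x ∈ intrinsicInterior ℝ X.support →
      ∃ σ₁ σ₂, σ₁ ∈ X.cells k ∧ σ₂ ∈ X.cells k ∧ τ ⊆ σ₁ ∧ τ ⊆ σ₂ ∧ σ₁ ≠ σ₂) ∧
    (∀ σ₁ σ₂ σ₃, σ₁ ∈ X.cells k → σ₂ ∈ X.cells k → σ₃ ∈ X.cells k →
      τ ⊆ σ₁ → τ ⊆ σ₂ → τ ⊆ σ₃ → σ₁ = σ₂ ∨ σ₁ = σ₃ ∨ σ₂ = σ₃) := by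
  have hτf : τ ∈ X.faces := hτ.1
  have hτd : polyDim τ = k - 1 := hτ.2
  have hτne : τ.Nonempty := X.nonempty τ hτf
  have hτconv : Convex ℝ τ := (X.isPolytope τ hτf).convex
  have hsub_sup : ∀ P ∈ X.faces, P ⊆ X.support := fun P hP y hy => ⟨P, hP, hy⟩
  have hτsup : τ ⊆ X.support := hsub_sup τ hτf
  have hsupne : X.support.Nonempty := hτne.mono hτsup
  have hxτ : x ∈ τ := intrinsicInterior_subset hx
  have hcl : ∀ P ∈ X.faces, IsClosed P := fun P hP => (X.isPolytope P hP).isClosed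
  set A : AffineSubspace ℝ (Euc n) := affineSpan ℝ X.support with hA
  set V : Submodule ℝ (Euc n) := vectorSpan ℝ X.support with hV
  have hAdir : A.direction = V := direction_affineSpan ℝ X.support
  set W : Submodule ℝ (Euc n) := vectorSpan ℝ τ with hW
  have hWV : W ≤ V := vectorSpan_mono ℝ hτsup
  set H : AffineSubspace ℝ (Euc n) := affineSpan ℝ τ with hH
  have hHdir : H.direction = W := direction_affineSpan ℝ τ
  have hxA : x ∈ A := subset_affineSpan ℝ _ (hτsup hxτ)
  have hxH : x ∈ H := subset_affineSpan ℝ _ hxτ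
  -- the dimension of the support is `k`
  have hdV : Module.finrank ℝ V = k := by
    obtain ⟨σ₀, hσ₀f, hσ₀d⟩ := hdim_eq
    have hge : k ≤ polyDim X.support := by
      rw [← hσ₀d]; exact polyDim_mono (hsub_sup σ₀ hσ₀f)
    have hle : polyDim X.support ≤ k := by
      obtain ⟨x₀, hx₀⟩ := Set.Nonempty.intrinsicInterior hconv hsupne
      obtain ⟨hx₀s, ε₀, hε₀, hball₀⟩ := mem_intrinsicInterior_iff'.1 hx₀
      have hcover : {y ∈ (A : Set (Euc n)) | dist y x₀ < ε₀} ⊆ ⋃₀ ↑X.finite.toFinset := by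
        rintro y ⟨hyA, hyd⟩
        rw [Set.Finite.coe_toFinset]
        exact hball₀ y hyA hyd
      obtain ⟨C, hC, x', hx'A, r', hr', hrel⟩ :=
        exists_relBall_subset (A : Set (Euc n)) X.finite.toFinset
          (fun C hC => hcl C (X.finite.mem_toFinset.1 hC)) x₀
          (subset_affineSpan ℝ _ hx₀s) ε₀ hε₀ hcover
      have hCf : C ∈ X.faces := X.finite.mem_toFinset.1 hC
      have hAle : A ≤ affineSpan ℝ C := by
        intro y hy
        exact le_affineSpan_of_relBall hx'A hr' (fun z hz hd => hrel ⟨hz, hd⟩) y hy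
      have hVle : V ≤ vectorSpan ℝ C := by
        rw [← hAdir, ← direction_affineSpan]
        exact AffineSubspace.direction_le hAle
      calc polyDim X.support ≤ polyDim C := Submodule.finrank_mono hVle
        _ ≤ k := hdim_le C hCf
    have hPS : Module.finrank ℝ ↥V = polyDim X.support := rfl
    omega
  have hdW : Module.finrank ℝ W = k - 1 := hτd
  -- a normal vector to `τ` inside `V`
  have hWltV : W < V := by
    refine lt_of_le_of_ne hWV (fun h => ?_)
    rw [h, hdV] at hdW
    omega
  obtain ⟨v, hvV, hvW⟩ := SetLike.exists_of_lt hWltV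
  set v' : Euc n := v - (W.orthogonalProjectionOnto v : Euc n) with hv'def
  have hv'V : v' ∈ V := Submodule.sub_mem V hvV (hWV (W.orthogonalProjectionOnto v).2)
  have hv'Wperp : v' ∈ Wᗮ := by exact W.sub_starProjection_mem_orthogonal v
  have hv'0 : v' ≠ 0 := by
    intro h
    apply hvW
    have : v = (W.orthogonalProjectionOnto v : Euc n) := by
      rw [← sub_eq_zero]; exact h
    rw [this]; exact (W.orthogonalProjectionOnto v).2
  have hinner0 : ∀ u ∈ W, (inner ℝ v' u : ℝ) = 0 :=
    (Submodule.mem_orthogonal' W v').1 hv'Wperp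
  have hfv'pos : (0:ℝ) < inner ℝ v' v' := by
    rw [real_inner_self_eq_norm_sq]
    exact pow_pos (norm_pos_iff.2 hv'0) 2
  -- characterization of `W` inside `V`
  have hVW : ∀ z ∈ V, ((inner ℝ v' z : ℝ) = 0 ↔ z ∈ W) := by
    have hWK : W ≤ V ⊓ LinearMap.ker (innerₗ (Euc n) v') := by
      intro w hw
      refine Submodule.mem_inf.2 ⟨hWV hw, ?_⟩
      rw [LinearMap.mem_ker, innerₗ_apply_apply]
      exact hinner0 w hw
    have hKlt : V ⊓ LinearMap.ker (innerₗ (Euc n) v') < V := by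
      refine lt_of_le_of_ne inf_le_left (fun h => ?_)
      have hmem : v' ∈ V ⊓ LinearMap.ker (innerₗ (Euc n) v') := h.symm ▸ hv'V
      have h2 := (Submodule.mem_inf.1 hmem).2
      rw [LinearMap.mem_ker, innerₗ_apply_apply] at h2
      linarith
    have hfr : Module.finrank ℝ ↥(V ⊓ LinearMap.ker (innerₗ (Euc n) v')) < k := by
      rw [← hdV]; exact Submodule.finrank_lt_finrank_of_lt hKlt
    have hKW : W = V ⊓ LinearMap.ker (innerₗ (Euc n) v') := by
      refine Submodule.eq_of_le_of_finrank_le hWK ?_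
      rw [hdW]; omega
    intro z hz
    constructor
    · intro h0
      rw [hKW]
      refine Submodule.mem_inf.2 ⟨hz, ?_⟩
      rw [LinearMap.mem_ker, innerₗ_apply_apply]
      exact h0
    · intro hzW
      rw [hKW] at hzW
      have h2 := (Submodule.mem_inf.1 hzW).2
      rwa [LinearMap.mem_ker, innerₗ_apply_apply] at h2
  -- membership criteria
  have hsubA : ∀ P ∈ X.faces, ∀ y ∈ P, y ∈ A :=
    fun P hP y hy => subset_affineSpan ℝ _ (hsub_sup P hP hy)
  have hdiff : ∀ y ∈ A, y - x ∈ V := by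
    intro y hy
    have h1 : y -ᵥ x ∈ A.direction := AffineSubspace.vsub_mem_direction hy hxA
    rw [hAdir] at h1
    simpa [vsub_eq_sub] using h1
  have hHmem : ∀ y ∈ A, (inner ℝ v' (y - x) : ℝ) = 0 → y ∈ H := by
    intro y hyA h0
    have h2 : y - x ∈ W := (hVW _ (hdiff y hyA)).1 h0
    have h3 : y -ᵥ x ∈ H.direction := by rw [hHdir]; simpa [vsub_eq_sub] using h2
    exact (AffineSubspace.vsub_right_mem_direction_iff_mem hxH y).1 h3
  have hHmem' : ∀ y ∈ H, (inner ℝ v' (y - x) : ℝ) = 0 := by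
    intro y hy
    have h1 : y -ᵥ x ∈ H.direction := AffineSubspace.vsub_mem_direction hy hxH
    rw [hHdir] at h1
    exact hinner0 _ (by simpa [vsub_eq_sub] using h1)
  -- relative interior ball of τ
  obtain ⟨-, ετ, hετ, hτball⟩ := mem_intrinsicInterior_iff'.1 hx
  have hHτ : ∀ y ∈ A, (inner ℝ v' (y - x) : ℝ) = 0 → dist y x < ετ → y ∈ τ :=
    fun y hyA h0 hd => hτball y (hHmem y hyA h0) hd
  -- covering radius around x
  have hbadcl : IsClosed (⋃₀ {P ∈ X.faces | x ∉ P}) := by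
    rw [sUnion_eq_biUnion]
    exact (X.finite.subset (sep_subset _ _)).isClosed_biUnion (fun P hP => hcl P hP.1)
  have hxnotin : x ∉ ⋃₀ {P ∈ X.faces | x ∉ P} := by
    rintro ⟨P, ⟨hPf, hPx⟩, hxP⟩
    exact hPx hxP
  obtain ⟨εc, hεc, hεcball⟩ :=
    Metric.mem_nhds_iff.1 (hbadcl.isOpen_compl.mem_nhds hxnotin)
  have hcov : ∀ y ∈ X.support, dist y x < εc → ∃ P, P ∈ X.faces ∧ x ∈ P ∧ y ∈ P := by
    intro y hy hd
    obtain ⟨P, hPf, hyP⟩ := hy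
    by_cases hxP : x ∈ P
    · exact ⟨P, hPf, hxP, hyP⟩
    · exact absurd ⟨P, ⟨hPf, hxP⟩, hyP⟩ (hεcball (Metric.mem_ball.2 hd))
  have habs : ∀ P ∈ X.faces, x ∈ P → τ ⊆ P := by
    intro P hPf hxP
    have hne : (τ ∩ P).Nonempty := ⟨x, hxτ, hxP⟩
    have hface := (X.inter_face τ hτf P hPf hne).1
    have heq := face_eq_of_relint hface ⟨hxτ, hxP⟩ hx
    intro y hy
    rw [← heq] at hy
    exact hy.2
  have hfind : ∀ y ∈ X.support, dist y x < εc → y ∉ H →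
      ∃ σ, (σ ∈ X.cells k ∧ τ ⊆ σ) ∧ y ∈ σ := by
    intro y hy hd hyH
    obtain ⟨P, hPf, hxP, hyP⟩ := hcov y hy hd
    have hτP : τ ⊆ P := habs P hPf hxP
    have hdim : polyDim P = k := by
      rcases eq_or_lt_of_le (hdim_le P hPf) with h | h
      · exact h
      · exfalso
        have hPk : polyDim P ≤ k - 1 := by omega
        have hsp : affineSpan ℝ τ = affineSpan ℝ P :=
          affineSpan_eq_of_le_dim hτne hτP (by rw [hτd]; exact hPk)
        apply hyH
        rw [hH, hsp]
        exact subset_affineSpan ℝ P hyP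
    exact ⟨P, ⟨⟨hPf, hdim⟩, hτP⟩, hyP⟩
  -- faces of k-cells
  have hfaceτ : ∀ σ, σ ∈ X.cells k → τ ⊆ σ → IsFaceOf τ σ := by
    intro σ hσ hτσ
    have hne : (σ ∩ τ).Nonempty := ⟨x, hτσ hxτ, hxτ⟩
    have h2 := (X.inter_face σ hσ.1 τ hτf hne).1
    rwa [Set.inter_eq_right.2 hτσ] at h2
  have hsign : ∀ σ, σ ∈ X.cells k → τ ⊆ σ →
      ∃ e : ℝ, (e = 1 ∨ e = -1) ∧ (∀ y ∈ σ, 0 ≤ e * (inner ℝ v' (y - x) : ℝ)) ∧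
        (∀ y ∈ σ, (inner ℝ v' (y - x) : ℝ) = 0 → y ∈ τ) ∧
        (∃ w ∈ σ, 0 < e * (inner ℝ v' (w - x) : ℝ)) := by
    intro σ hσ hτσ
    have hσA : ∀ y ∈ σ, y - x ∈ V := fun y hy => hdiff y (hsubA σ hσ.1 y hy)
    have hneq : τ ≠ σ := by
      intro h
      rw [h] at hτd
      rw [hσ.2] at hτd
      omega
    exact sign_lemma V hτσ hσA hVW hv'V hv'0 hxτ hneq (hfaceτ σ hσ hτσ)
  -- halfball for each signed cell
  have hhalf : ∀ σ, σ ∈ X.cells k → τ ⊆ σ → ∀ e : ℝ, (e = 1 ∨ e = -1) →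
      (∀ y ∈ σ, 0 ≤ e * (inner ℝ v' (y - x) : ℝ)) →
      (∃ w ∈ σ, 0 < e * (inner ℝ v' (w - x) : ℝ)) →
      ∃ δ, 0 < δ ∧ ∀ y ∈ A, dist y x < δ → 0 ≤ e * (inner ℝ v' (y - x) : ℝ) → y ∈ σ := by
    intro σ hσ hτσ e he hs hw
    obtain ⟨w, hwσ, hwpos⟩ := hw
    exact halfball_lemma (X.isPolytope σ hσ.1).convex hτσ hxA
      (fun y hy => hsubA σ hσ.1 y hy) hv'0 hετ hHτ he hs hwσ hwpos
  -- uniqueness for cells on the same side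
  have huniq : ∀ σ₁ σ₂, σ₁ ∈ X.cells k → τ ⊆ σ₁ → σ₂ ∈ X.cells k → τ ⊆ σ₂ →
      ∀ e : ℝ, (e = 1 ∨ e = -1) →
      (∀ y ∈ σ₁, 0 ≤ e * (inner ℝ v' (y - x) : ℝ)) →
      (∃ w ∈ σ₁, 0 < e * (inner ℝ v' (w - x) : ℝ)) →
      (∀ y ∈ σ₂, 0 ≤ e * (inner ℝ v' (y - x) : ℝ)) →
      (∃ w ∈ σ₂, 0 < e * (inner ℝ v' (w - x) : ℝ)) → σ₁ = σ₂ := by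
    intro σ₁ σ₂ hσ₁ hτσ₁ hσ₂ hτσ₂ e he hs₁ hw₁ hs₂ hw₂
    obtain ⟨δ₁, hδ₁, hb₁⟩ := hhalf σ₁ hσ₁ hτσ₁ e he hs₁ hw₁
    obtain ⟨δ₂, hδ₂, hb₂⟩ := hhalf σ₂ hσ₂ hτσ₂ e he hs₂ hw₂
    have he2 : e * e = 1 := by rcases he with rfl | rfl <;> norm_num
    set δ : ℝ := min δ₁ δ₂ with hδ
    have hδpos : 0 < δ := lt_min hδ₁ hδ₂
    have hv'n : (0:ℝ) < ‖v'‖ := norm_pos_iff.2 hv'0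
    set c₀ : ℝ := δ / (2 * ‖v'‖) with hc₀
    have hc₀pos : 0 < c₀ := by positivity
    set z : Euc n := x + c₀ • (e • v') with hz
    have hzx : z - x = (c₀ * e) • v' := by rw [hz, smul_smul]; abel
    have hzA : z ∈ A := by
      have h1 : z -ᵥ x ∈ A.direction := by
        rw [hAdir]
        have : z -ᵥ x = (c₀ * e) • v' := hzx
        rw [this]
        exact Submodule.smul_mem _ _ hv'V
      exact (AffineSubspace.vsub_right_mem_direction_iff_mem hxA z).1 h1
    have hzinner : (inner ℝ v' (z - x) : ℝ) = c₀ * e * (inner ℝ v' v' : ℝ) := by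
      rw [hzx, real_inner_smul_right]
    have hzsgn : 0 < e * (inner ℝ v' (z - x) : ℝ) := by
      rw [hzinner]
      have heq : e * (c₀ * e * (inner ℝ v' v' : ℝ)) = c₀ * (inner ℝ v' v' : ℝ) := by
        linear_combination (c₀ * (inner ℝ v' v' : ℝ)) * he2
      rw [heq]
      positivity
    have hzdist : dist z x = δ / 2 := by
      rw [dist_eq_norm, hzx, norm_smul, Real.norm_eq_abs]
      have : |c₀ * e| = c₀ := by
        rcases he with rfl | rfl
        · rw [mul_one, abs_of_pos hc₀pos]
        · rw [abs_of_neg (by linarith [mul_neg_one c₀] : c₀ * (-1:ℝ) < 0)]; ring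
      rw [this, hc₀]
      field_simp
    have hz₁ : z ∈ σ₁ := hb₁ z hzA (by rw [hzdist]; calc δ/2 < δ := by linarith
                                                      _ ≤ δ₁ := min_le_left _ _) (le_of_lt hzsgn)
    have hz₂ : z ∈ σ₂ := hb₂ z hzA (by rw [hzdist]; calc δ/2 < δ := by linarith
                                                      _ ≤ δ₂ := min_le_right _ _) (le_of_lt hzsgn)
    -- the common face σ₁ ∩ σ₂ contains a relative ball, so it is everything
    have hsub : ∀ ⦃σa σb : Set (Euc n)⦄, σa ∈ X.cells k → σb ∈ X.cells k →
        (∀ y ∈ A, dist y x < δ → 0 ≤ e * (inner ℝ v' (y - x) : ℝ) → y ∈ σa) →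
        (∀ y ∈ A, dist y x < δ → 0 ≤ e * (inner ℝ v' (y - x) : ℝ) → y ∈ σb) →
        IsFaceOf (σa ∩ σb) σa → σa ⊆ σb := by
      intro σa σb hσa hσb hba hbb hfab
      obtain ⟨g, c, hg, heqF⟩ := hfab
      have hgball : ∀ y ∈ A, dist y z < δ / 2 → g y = c := by
        intro y hyA hdz
        have hdx : dist y x < δ := by
          calc dist y x ≤ dist y z + dist z x := dist_triangle _ _ _
            _ < δ / 2 + δ / 2 := by rw [hzdist] at *; linarith
            _ = δ := by ring
        have hyz : (inner ℝ v' (y - x) : ℝ) = (inner ℝ v' (y - z) : ℝ) + (inner ℝ v' (z - x) : ℝ) := by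
          rw [← inner_add_right]
          norm_num
        have hbound : |(inner ℝ v' (y - z) : ℝ)| ≤ ‖v'‖ * dist y z := by
          rw [dist_eq_norm]
          exact abs_real_inner_le_norm _ _
        have hsgny : 0 ≤ e * (inner ℝ v' (y - x) : ℝ) := by
          rw [hyz, mul_add]
          have h1 : e * (inner ℝ v' (z - x) : ℝ) = c₀ * (inner ℝ v' v' : ℝ) := by
            rw [hzinner]
            linear_combination (c₀ * (inner ℝ v' v' : ℝ)) * he2
          have h2 : |e * (inner ℝ v' (y - z) : ℝ)| ≤ ‖v'‖ * dist y z := by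
            rcases he with rfl | rfl
            · rw [one_mul]; exact hbound
            · rw [neg_one_mul, abs_neg]; exact hbound
          have h3 : c₀ * (inner ℝ v' v' : ℝ) = (δ / 2) * ‖v'‖ := by
            rw [real_inner_self_eq_norm_sq, hc₀]
            field_simp
          have h4 : ‖v'‖ * dist y z < ‖v'‖ * (δ / 2) := by
            exact mul_lt_mul_of_pos_left hdz hv'n
          have h5 := neg_abs_le (e * (inner ℝ v' (y - z) : ℝ))
          rw [h1, h3]
          nlinarith
        have hyab : y ∈ σa ∩ σb := ⟨hba y hyA hdx hsgny, hbb y hyA hdx hsgny⟩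
        rw [heqF] at hyab
        exact hyab.2
      have hgA : ∀ y ∈ A, g y = c :=
        eq_on_affine_of_relBall g c A hzA (by positivity) hgball
      intro y hy
      have : y ∈ σa ∩ σb := by
        rw [heqF]
        exact ⟨hy, hgA y (hsubA σa hσa.1 y hy)⟩
      exact this.2
    have hneab : (σ₁ ∩ σ₂).Nonempty := ⟨z, hz₁, hz₂⟩
    obtain ⟨hf1, hf2⟩ := X.inter_face σ₁ hσ₁.1 σ₂ hσ₂.1 hneab
    have h12 : σ₁ ⊆ σ₂ := hsub hσ₁ hσ₂
      (fun y hy hd hs => hb₁ y hy (lt_of_lt_of_le hd (min_le_left _ _)) hs)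
      (fun y hy hd hs => hb₂ y hy (lt_of_lt_of_le hd (min_le_right _ _)) hs) hf1
    have h21 : σ₂ ⊆ σ₁ := by
      have hf2' : IsFaceOf (σ₂ ∩ σ₁) σ₂ := by rwa [Set.inter_comm] at hf2
      exact hsub hσ₂ hσ₁
        (fun y hy hd hs => hb₂ y hy (lt_of_lt_of_le hd (min_le_right _ _)) hs)
        (fun y hy hd hs => hb₁ y hy (lt_of_lt_of_le hd (min_le_left _ _)) hs) hf2'
    exact Set.Subset.antisymm h12 h21
  refine ⟨?_, ?_, ?_, ?_⟩
  · -- existence of at least one k-cell containing τ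
    have hwH : ∃ w ∈ X.support, w ∉ H := by
      by_contra hcon
      push_neg at hcon
      have h1 : A ≤ H := by
        rw [hA]
        exact affineSpan_le.2 (fun w hw => hcon w hw)
      have h2 : V ≤ W := by
        rw [← hAdir, ← hHdir]
        exact AffineSubspace.direction_le h1
      have h3 := Submodule.finrank_mono h2
      rw [hdV, hdW] at h3
      omega
    obtain ⟨w, hwsup, hwHn⟩ := hwH
    have hfw0 : (inner ℝ v' (w - x) : ℝ) ≠ 0 := by
      intro h0
      exact hwHn (hHmem w (subset_affineSpan ℝ _ hwsup) h0)
    set d := dist w x with hd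
    have hdnn : 0 ≤ d := dist_nonneg
    set t0 : ℝ := min (1/2) (εc / (2 * (d + 1))) with ht0
    have ht0pos : 0 < t0 := lt_min (by norm_num) (by positivity)
    have ht0le : t0 ≤ 1/2 := min_le_left _ _
    set y0 : Euc n := x + t0 • (w - x) with hy0
    have hy0sup : y0 ∈ X.support := by
      have hcomb := hconv (hτsup hxτ) hwsup (by linarith : (0:ℝ) ≤ 1 - t0)
        (le_of_lt ht0pos) (by ring : (1 - t0) + t0 = 1)
      have heqc : (1 - t0) • x + t0 • w = y0 := by rw [hy0]; module
      rwa [heqc] at hcomb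
    have hy0dist : dist y0 x < εc := by
      have h1 : dist y0 x = t0 * d := by
        rw [dist_eq_norm, hy0]
        have h2 : x + t0 • (w - x) - x = t0 • (w - x) := by abel
        rw [h2, norm_smul, Real.norm_eq_abs, abs_of_pos ht0pos, hd, dist_eq_norm]
      have h2 : t0 ≤ εc / (2 * (d + 1)) := min_le_right _ _
      have h3 : t0 * d ≤ (εc / (2 * (d + 1))) * d := mul_le_mul_of_nonneg_right h2 hdnn
      have h4 : (εc / (2 * (d + 1))) * d < εc := by
        rw [div_mul_eq_mul_div, div_lt_iff₀ (by positivity)]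
        nlinarith
      rw [h1]; linarith
    have hy0H : y0 ∉ H := by
      intro hmem
      have h0 := hHmem' y0 hmem
      have h1 : y0 - x = t0 • (w - x) := by rw [hy0]; abel
      rw [h1, real_inner_smul_right] at h0
      rcases mul_eq_zero.1 h0 with h' | h'
      · exact (ne_of_gt ht0pos) h'
      · exact hfw0 h'
    obtain ⟨σ, hσ, -⟩ := hfind y0 hy0sup hy0dist hy0H
    exact ⟨σ, hσ⟩
  · -- two distinct k-cells containing τ force x into the intrinsic interior
    intro σ₁ σ₂ hσ₁ hσ₂ hτσ₁ hτσ₂ hne12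
    obtain ⟨e₁, he₁, hs₁, hm₁, hw₁⟩ := hsign σ₁ hσ₁ hτσ₁
    obtain ⟨e₂, he₂, hs₂, hm₂, hw₂⟩ := hsign σ₂ hσ₂ hτσ₂
    have hnee : e₁ ≠ e₂ := by
      intro h
      have hs₂' : ∀ y ∈ σ₂, 0 ≤ e₁ * (inner ℝ v' (y - x) : ℝ) := by rw [h]; exact hs₂
      have hw₂' : ∃ w ∈ σ₂, 0 < e₁ * (inner ℝ v' (w - x) : ℝ) := by rw [h]; exact hw₂
      exact hne12 (huniq σ₁ σ₂ hσ₁ hτσ₁ hσ₂ hτσ₂ e₁ he₁ hs₁ hw₁ hs₂' hw₂')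
    have he₂e : e₂ = -e₁ := by
      rcases he₁ with rfl | rfl <;> rcases he₂ with rfl | rfl
      · exact absurd rfl hnee
      · norm_num
      · norm_num
      · exact absurd rfl hnee
    obtain ⟨δ₁, hδ₁, hb₁⟩ := hhalf σ₁ hσ₁ hτσ₁ e₁ he₁ hs₁ hw₁
    obtain ⟨δ₂, hδ₂, hb₂⟩ := hhalf σ₂ hσ₂ hτσ₂ e₂ he₂ hs₂ hw₂
    rw [mem_intrinsicInterior_iff']
    refine ⟨hτsup hxτ, min δ₁ δ₂, lt_min hδ₁ hδ₂, ?_⟩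
    intro y hyA hyd
    rcases le_or_gt 0 (e₁ * (inner ℝ v' (y - x) : ℝ)) with hcase | hcase
    · exact hsub_sup σ₁ hσ₁.1 (hb₁ y hyA (lt_of_lt_of_le hyd (min_le_left _ _)) hcase)
    · have hcase' : 0 ≤ e₂ * (inner ℝ v' (y - x) : ℝ) := by
        rw [he₂e, neg_mul]; linarith
      exact hsub_sup σ₂ hσ₂.1 (hb₂ y hyA (lt_of_lt_of_le hyd (min_le_right _ _)) hcase')
  · -- if x is an intrinsic interior point, there are two distinct k-cells
    intro hxint
    obtain ⟨hxsup, εi, hεi, hiball⟩ := mem_intrinsicInterior_iff'.1 hxint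
    have hv'n : (0:ℝ) < ‖v'‖ := norm_pos_iff.2 hv'0
    set ε' : ℝ := min εc εi with hε'
    have hε'pos : 0 < ε' := lt_min hεc hεi
    set c₁ : ℝ := ε' / (2 * ‖v'‖) with hc₁
    have hc₁pos : 0 < c₁ := by positivity
    have hkey : ∀ s : ℝ, s ≠ 0 → |s| * ‖v'‖ < ε' →
        ∃ σ, (σ ∈ X.cells k ∧ τ ⊆ σ) ∧ x + s • v' ∈ σ := by
      intro s hs hdist
      set z : Euc n := x + s • v' with hzdef
      have hzx : z - x = s • v' := by rw [hzdef]; abel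
      have hzA : z ∈ A := by
        have h1 : z -ᵥ x ∈ A.direction := by
          rw [hAdir, show z -ᵥ x = s • v' from hzx]
          exact Submodule.smul_mem _ _ hv'V
        exact (AffineSubspace.vsub_right_mem_direction_iff_mem hxA z).1 h1
      have hzd : dist z x < ε' := by
        rw [dist_eq_norm, hzx, norm_smul, Real.norm_eq_abs]; exact hdist
      have hzsup : z ∈ X.support := hiball z hzA (lt_of_lt_of_le hzd (min_le_right _ _))
      have hzH : z ∉ H := by
        intro hmem
        have h0 := hHmem' z hmem
        rw [hzx, real_inner_smul_right] at h0
        rcases mul_eq_zero.1 h0 with h' | h'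
        · exact hs h'
        · linarith [hfv'pos]
      obtain ⟨σ, hσ, hzσ⟩ := hfind z hzsup (lt_of_lt_of_le hzd (min_le_left _ _)) hzH
      exact ⟨σ, hσ, hzσ⟩
    have hcd : |c₁| * ‖v'‖ < ε' := by
      rw [abs_of_pos hc₁pos, hc₁, div_mul_eq_mul_div, div_lt_iff₀ (by positivity)]
      nlinarith
    have hcd' : |(-c₁)| * ‖v'‖ < ε' := by rw [abs_neg]; exact hcd
    obtain ⟨σp, hσp, hzp⟩ := hkey c₁ (ne_of_gt hc₁pos) hcd
    obtain ⟨σm, hσm, hzm⟩ := hkey (-c₁) (by simp [ne_of_gt hc₁pos]) hcd'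
    refine ⟨σp, σm, hσp.1, hσm.1, hσp.2, hσm.2, ?_⟩
    intro heq
    obtain ⟨e, he, hs, hm, hw⟩ := hsign σp hσp.1 hσp.2
    have hzm' : x + (-c₁) • v' ∈ σp := by rw [heq]; exact hzm
    have h1 := hs _ hzp
    have h2 := hs _ hzm'
    have hi1 : (inner ℝ v' ((x + c₁ • v') - x) : ℝ) = c₁ * (inner ℝ v' v' : ℝ) := by
      rw [show (x + c₁ • v') - x = c₁ • v' by abel, real_inner_smul_right]
    have hi2 : (inner ℝ v' ((x + (-c₁) • v') - x) : ℝ) = -c₁ * (inner ℝ v' v' : ℝ) := by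
      rw [show (x + (-c₁) • v') - x = (-c₁) • v' by abel, real_inner_smul_right]
    rw [hi1] at h1
    rw [hi2] at h2
    rcases he with rfl | rfl
    · nlinarith [hfv'pos, hc₁pos]
    · nlinarith [hfv'pos, hc₁pos]
  · -- at most two k-cells contain τ
    intro σ₁ σ₂ σ₃ hσ₁ hσ₂ hσ₃ hτσ₁ hτσ₂ hτσ₃
    obtain ⟨e₁, he₁, hs₁, hm₁, hw₁⟩ := hsign σ₁ hσ₁ hτσ₁
    obtain ⟨e₂, he₂, hs₂, hm₂, hw₂⟩ := hsign σ₂ hσ₂ hτσ₂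
    obtain ⟨e₃, he₃, hs₃, hm₃, hw₃⟩ := hsign σ₃ hσ₃ hτσ₃
    rcases he₁ with rfl | rfl <;> rcases he₂ with rfl | rfl <;> rcases he₃ with rfl | rfl
    · exact Or.inl (huniq σ₁ σ₂ hσ₁ hτσ₁ hσ₂ hτσ₂ 1 (Or.inl rfl) hs₁ hw₁ hs₂ hw₂)
    · exact Or.inl (huniq σ₁ σ₂ hσ₁ hτσ₁ hσ₂ hτσ₂ 1 (Or.inl rfl) hs₁ hw₁ hs₂ hw₂)
    · exact Or.inr (Or.inl (huniq σ₁ σ₃ hσ₁ hτσ₁ hσ₃ hτσ₃ 1 (Or.inl rfl) hs₁ hw₁ hs₃ hw₃))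
    · exact Or.inr (Or.inr (huniq σ₂ σ₃ hσ₂ hτσ₂ hσ₃ hτσ₃ (-1) (Or.inr rfl) hs₂ hw₂ hs₃ hw₃))
    · exact Or.inr (Or.inr (huniq σ₂ σ₃ hσ₂ hτσ₂ hσ₃ hτσ₃ 1 (Or.inl rfl) hs₂ hw₂ hs₃ hw₃))
    · exact Or.inr (Or.inl (huniq σ₁ σ₃ hσ₁ hτσ₁ hσ₃ hτσ₃ (-1) (Or.inr rfl) hs₁ hw₁ hs₃ hw₃))
    · exact Or.inl (huniq σ₁ σ₂ hσ₁ hτσ₁ hσ₂ hτσ₂ (-1) (Or.inr rfl) hs₁ hw₁ hs₂ hw₂)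
    · exact Or.inl (huniq σ₁ σ₂ hσ₁ hτσ₁ hσ₂ hτσ₂ (-1) (Or.inr rfl) hs₁ hw₁ hs₂ hw₂)

theorem statement0 {n k : ℕ} (hk : 1 ≤ k) (X : PolyComplex n)
    (hdim_le : ∀ σ ∈ X.faces, polyDim σ ≤ k)
    (hdim_eq : ∃ σ ∈ X.faces, polyDim σ = k)
    (hconv : Convex ℝ X.support)
    (τ : Set (Euc n)) (hτ : τ ∈ X.cells (k - 1)) :
    (τ ⊆ intrinsicFrontier ℝ X.support →
      ∃! σ, σ ∈ X.cells k ∧ IsFacetOf τ σ) ∧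
    (¬ τ ⊆ intrinsicFrontier ℝ X.support →
      ∃ σ₁ σ₂, σ₁ ∈ X.cells k ∧ σ₂ ∈ X.cells k ∧ σ₁ ≠ σ₂ ∧
        IsFacetOf τ σ₁ ∧ IsFacetOf τ σ₂ ∧
        ∀ σ ∈ X.cells k, IsFacetOf τ σ → σ = σ₁ ∨ σ = σ₂) := by
  have hτf : τ ∈ X.faces := hτ.1
  have hτd : polyDim τ = k - 1 := hτ.2
  have hτne : τ.Nonempty := X.nonempty τ hτf
  have hτconv : Convex ℝ τ := (X.isPolytope τ hτf).convex
  have hsub_sup : ∀ P ∈ X.faces, P ⊆ X.support := fun P hP y hy => ⟨P, hP, hy⟩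
  have hτsup : τ ⊆ X.support := hsub_sup τ hτf
  have hfacet_iff : ∀ σ ∈ X.cells k, (IsFacetOf τ σ ↔ τ ⊆ σ) := by
    intro σ hσ
    constructor
    · rintro ⟨⟨f, c, hf, heq⟩, -⟩
      rw [heq]; exact fun y hy => hy.1
    · intro hτσ
      constructor
      · have hne : (σ ∩ τ).Nonempty := hτne.mono (fun y hy => ⟨hτσ hy, hy⟩)
        have h2 := (X.inter_face σ hσ.1 τ hτf hne).1
        rwa [Set.inter_eq_right.2 hτσ] at h2
      · rw [hτd, hσ.2]
        omega
  obtain ⟨x₁, hx₁⟩ := Set.Nonempty.intrinsicInterior hτconv hτne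
  constructor
  · -- boundary case: exactly one
    intro hbd
    obtain ⟨hex, huniq2, -, -⟩ := central hk X hdim_le hdim_eq hconv τ hτ hx₁
    obtain ⟨σ, hσ, hτσ⟩ := hex
    refine ⟨σ, ⟨hσ, (hfacet_iff σ hσ).2 hτσ⟩, ?_⟩
    rintro σ' ⟨hσ', hfac'⟩
    have hτσ' : τ ⊆ σ' := (hfacet_iff σ' hσ').1 hfac'
    by_contra hne'
    have hint := huniq2 σ' σ hσ' hσ hτσ' hτσ hne'
    have hx₁τ : x₁ ∈ τ := intrinsicInterior_subset hx₁
    have hfr := hbd hx₁τ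
    rw [← closure_diff_intrinsicInterior] at hfr
    exact hfr.2 hint
  · -- interior case: exactly two
    intro hbd
    rw [Set.not_subset] at hbd
    obtain ⟨x₀, hx₀τ, hx₀f⟩ := hbd
    have hx₀int : x₀ ∈ intrinsicInterior ℝ X.support := by
      rw [← closure_diff_intrinsicFrontier]
      exact ⟨subset_closure (hτsup hx₀τ), hx₀f⟩
    obtain ⟨-, εi, hεi, hiball⟩ := mem_intrinsicInterior_iff'.1 hx₀int
    obtain ⟨hx₁τ, ετ, hετ, hτball⟩ := mem_intrinsicInterior_iff'.1 hx₁
    set d := dist x₁ x₀ with hd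
    have hdnn : 0 ≤ d := dist_nonneg
    set c : ℝ := min (1/2) (εi / (2 * (d + 1))) with hc
    have hcpos : 0 < c := lt_min (by norm_num) (by positivity)
    have hcle : c ≤ 1/2 := min_le_left _ _
    set x : Euc n := x₀ + c • (x₁ - x₀) with hxdef
    have hx₁H : x₁ ∈ affineSpan ℝ τ := subset_affineSpan ℝ τ hx₁τ
    have hx₀H : x₀ ∈ affineSpan ℝ τ := subset_affineSpan ℝ τ hx₀τ
    have hxH : x ∈ affineSpan ℝ τ := by
      have h1 : x -ᵥ x₀ ∈ (affineSpan ℝ τ).direction := by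
        have h2 : x -ᵥ x₀ = c • (x₁ -ᵥ x₀) := by
          rw [vsub_eq_sub, vsub_eq_sub, hxdef]; abel
        rw [h2]
        exact Submodule.smul_mem _ _ (AffineSubspace.vsub_mem_direction hx₁H hx₀H)
      exact (AffineSubspace.vsub_right_mem_direction_iff_mem hx₀H x).1 h1
    have hxrelint : x ∈ intrinsicInterior ℝ τ := by
      rw [mem_intrinsicInterior_iff']
      have hxτmem : x ∈ τ := by
        have hcomb := hτconv hx₁τ hx₀τ (le_of_lt hcpos)
          (by linarith : (0:ℝ) ≤ 1 - c) (by ring)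
        have heqc : c • x₁ + (1 - c) • x₀ = x := by rw [hxdef]; module
        rwa [heqc] at hcomb
      refine ⟨hxτmem, c * ετ, by positivity, ?_⟩
      intro y hyH hyd
      set y₁ : Euc n := x₁ + c⁻¹ • (y - x) with hy₁def
      have hy₁H : y₁ ∈ affineSpan ℝ τ := by
        have h1 : y₁ -ᵥ x₁ ∈ (affineSpan ℝ τ).direction := by
          have h2 : y₁ -ᵥ x₁ = c⁻¹ • (y -ᵥ x) := by
            rw [vsub_eq_sub, vsub_eq_sub, hy₁def]; abel
          rw [h2]
          exact Submodule.smul_mem _ _ (AffineSubspace.vsub_mem_direction hyH hxH)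
        exact (AffineSubspace.vsub_right_mem_direction_iff_mem hx₁H y₁).1 h1
      have hy₁d : dist y₁ x₁ < ετ := by
        rw [dist_eq_norm, hy₁def]
        have h2 : x₁ + c⁻¹ • (y - x) - x₁ = c⁻¹ • (y - x) := by abel
        rw [h2, norm_smul, Real.norm_eq_abs, abs_of_pos (by positivity : (0:ℝ) < c⁻¹),
          ← dist_eq_norm]
        calc c⁻¹ * dist y x < c⁻¹ * (c * ετ) :=
              mul_lt_mul_of_pos_left hyd (by positivity)
          _ = ετ := by field_simp
      have hy₁τ : y₁ ∈ τ := hτball y₁ hy₁H hy₁d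
      have hyeq : y = c • y₁ + (1 - c) • x₀ := by
        rw [hy₁def, smul_add, smul_inv_smul₀ (ne_of_gt hcpos), hxdef]
        module
      rw [hyeq]
      exact hτconv hy₁τ hx₀τ (le_of_lt hcpos) (by linarith) (by ring)
    have hxint : x ∈ intrinsicInterior ℝ X.support := by
      rw [mem_intrinsicInterior_iff']
      have hxsup : x ∈ X.support := hτsup (intrinsicInterior_subset hxrelint)
      have hdx₀ : dist x x₀ < εi / 2 := by
        rw [dist_eq_norm, hxdef]
        have h2 : x₀ + c • (x₁ - x₀) - x₀ = c • (x₁ - x₀) := by abel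
        rw [h2, norm_smul, Real.norm_eq_abs, abs_of_pos hcpos, ← dist_eq_norm]
        have h3 : c ≤ εi / (2 * (d + 1)) := min_le_right _ _
        have h4 : c * d ≤ (εi / (2 * (d + 1))) * d := mul_le_mul_of_nonneg_right h3 hdnn
        have h5 : (εi / (2 * (d + 1))) * d < εi / 2 := by
          rw [div_mul_eq_mul_div, div_lt_div_iff₀ (by positivity) (by norm_num)]
          nlinarith
        have h6 : dist x₁ x₀ = d := hd.symm
        rw [h6]
        linarith
      refine ⟨hxsup, εi / 2, by positivity, ?_⟩
      intro y hyA hyd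
      apply hiball y hyA
      calc dist y x₀ ≤ dist y x + dist x x₀ := dist_triangle _ _ _
        _ < εi / 2 + εi / 2 := by linarith
        _ = εi := by ring
    obtain ⟨-, -, hex2, hmost2⟩ := central hk X hdim_le hdim_eq hconv τ hτ hxrelint
    obtain ⟨σ₁, σ₂, hσ₁, hσ₂, hτσ₁, hτσ₂, hne12⟩ := hex2 hxint
    refine ⟨σ₁, σ₂, hσ₁, hσ₂, hne12, (hfacet_iff σ₁ hσ₁).2 hτσ₁,
      (hfacet_iff σ₂ hσ₂).2 hτσ₂, ?_⟩
    intro σ hσ hfac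
    have hτσ : τ ⊆ σ := (hfacet_iff σ hσ).1 hfac
    rcases hmost2 σ σ₁ σ₂ hσ hσ₁ hσ₂ hτσ hτσ₁ hτσ₂ with h | h | h
    · exact Or.inl h
    · exact Or.inr h
    · exact absurd h hne12

end
end

section
/- Let σ be an oriented polytope in ℝ^n of dimension k ≥ 1, and let X be a polyhedral subdivision of σ all of whose members are oriented. Suppose τ ∈ X_{k−1} is a facet of two distinct faces σ₁, σ₂ ∈ X_k. Then sign(σ₁,σ)·sign(τ,σ₁) + sign(σ₂,σ)·sign(τ,σ₂) = 0. -/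
open Set
open scoped InnerProductSpace

noncomputable section

/-- An (ambient representative of an) orientation form on `span P`: an alternating form whose
restriction to `span P` is nonzero. -/
def OrientsOn {n k : ℕ} (P : Set (Euc n)) (ω : AlternatingMap ℝ (Euc n) ℝ (Fin k)) : Prop :=
  ∃ w : Fin k → Euc n, (∀ i, w i ∈ vectorSpan ℝ P) ∧ ω w ≠ 0

/-- `w` is a basis of `span P`, the space of directions of the affine hull of `P`. -/
def IsSpanBasis {n m : ℕ} (P : Set (Euc n)) (w : Fin m → Euc n) : Prop :=
  LinearIndependent ℝ w ∧ Submodule.span ℝ (Set.range w) = vectorSpan ℝ P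

/-- A normal vector of the facet `τ` pointing inwards to `σ`. -/
def IsInwardNormal {n : ℕ} (τ σ : Set (Euc n)) (η : Euc n) : Prop :=
  η ≠ 0 ∧ η ∈ vectorSpan ℝ σ ∧ (∀ w ∈ vectorSpan ℝ τ, ⟪η, w⟫_ℝ = 0) ∧
    ∀ p ∈ τ, ∀ x ∈ σ, 0 ≤ ⟪η, x - p⟫_ℝ

/-- The value `sgn(ω_σ(η, w₁, …, w_m)) · sgn(ω_τ(w₁, …, w_m))` computing `sign(τ,σ)` from the
choice of inward normal `η` and basis `w` of `span τ`. -/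
def facetSignVal {n m : ℕ} (ωσ : AlternatingMap ℝ (Euc n) ℝ (Fin (m + 1)))
    (ωτ : AlternatingMap ℝ (Euc n) ℝ (Fin m)) (η : Euc n) (w : Fin m → Euc n) : ℝ :=
  Real.sign (ωσ (Fin.cons η w)) * Real.sign (ωτ w)

/-- The value `sgn(ω_σ(w₁,…,w_k)) · sgn(ω_σ'(w₁,…,w_k))` computing `sign(σ',σ)` for polytopes
of equal dimension from the choice of basis `w` of `span σ`. -/
def relSignVal {n k : ℕ} (ωσ ωσ' : AlternatingMap ℝ (Euc n) ℝ (Fin k))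
    (w : Fin k → Euc n) : ℝ :=
  Real.sign (ωσ w) * Real.sign (ωσ' w)


/-! ### Auxiliary lemmas -/

lemma sign_mul' (a b : ℝ) : Real.sign (a * b) = Real.sign a * Real.sign b := by
  rcases lt_trichotomy a 0 with ha|rfl|ha
  · rcases lt_trichotomy b 0 with hb|rfl|hb
    · rw [Real.sign_of_pos (mul_pos_of_neg_of_neg ha hb), Real.sign_of_neg ha,
        Real.sign_of_neg hb]; ring
    · simp [Real.sign_zero]
    · rw [Real.sign_of_neg (mul_neg_of_neg_of_pos ha hb), Real.sign_of_neg ha,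
        Real.sign_of_pos hb]; ring
  · simp [Real.sign_zero]
  · rcases lt_trichotomy b 0 with hb|rfl|hb
    · rw [Real.sign_of_neg (mul_neg_of_pos_of_neg ha hb), Real.sign_of_pos ha,
        Real.sign_of_neg hb]; ring
    · simp [Real.sign_zero]
    · rw [Real.sign_of_pos (mul_pos ha hb), Real.sign_of_pos ha, Real.sign_of_pos hb]; ring

lemma inner_vectorSpan_eq_zero {n : ℕ} {s : Set (Euc n)} {η : Euc n}
    (h : ∀ x ∈ s, ∀ y ∈ s, ⟪η, x - y⟫_ℝ = 0) :
    ∀ v ∈ vectorSpan ℝ s, ⟪η, v⟫_ℝ = 0 := by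
  intro v hv
  rw [vectorSpan_def] at hv
  induction hv using Submodule.span_induction with
  | mem x hx =>
      obtain ⟨a, ha, b, hb, rfl⟩ := hx
      exact h a ha b hb
  | zero => simp
  | add x y _ _ hx hy => rw [inner_add_right, hx, hy]; ring
  | smul c x _ hx => rw [real_inner_smul_right, hx]; ring

lemma exists_relint {n : ℕ} {τ : Set (Euc n)} (hconv : Convex ℝ τ) (hne : τ.Nonempty) :
    ∃ p ∈ τ, ∀ v ∈ vectorSpan ℝ τ, ∀ᶠ t in nhds (0:ℝ), p + t • v ∈ τ := by
  obtain ⟨p, hp⟩ := hne.intrinsicInterior hconv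
  obtain ⟨q, hq, hqp⟩ := mem_intrinsicInterior.1 hp
  have hpτ : p ∈ τ := by
    have : q ∈ (((↑) : affineSpan ℝ τ → Euc n) ⁻¹' τ) := interior_subset hq
    simpa [hqp] using this
  refine ⟨p, hpτ, ?_⟩
  intro v hv
  have hvdir : v ∈ (affineSpan ℝ τ).direction := by
    rwa [direction_affineSpan]
  have hmem : ∀ t : ℝ, (q : Euc n) + t • v ∈ affineSpan ℝ τ := by
    intro t
    have := AffineSubspace.vadd_mem_of_mem_direction
      (Submodule.smul_mem _ t hvdir) q.2
    rwa [vadd_eq_add, add_comm] at this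
  set φ : ℝ → affineSpan ℝ τ := fun t => ⟨(q : Euc n) + t • v, hmem t⟩ with hφ
  have hφc : Continuous φ := by
    apply Continuous.subtype_mk
    exact continuous_const.add (continuous_id.smul continuous_const)
  have h0 : φ 0 = q := by
    apply Subtype.ext; simp [hφ]
  have hev : ∀ᶠ t in nhds (0:ℝ), φ t ∈ interior (((↑) : affineSpan ℝ τ → Euc n) ⁻¹' τ) := by
    have := hφc.continuousAt (x := (0:ℝ))
    exact this.eventually_mem (isOpen_interior.mem_nhds (h0 ▸ hq))
  refine hev.mono fun t ht => ?_
  have : φ t ∈ (((↑) : affineSpan ℝ τ → Euc n) ⁻¹' τ) := interior_subset ht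
  simpa [hφ, hqp] using this

lemma exists_spanBasis {n m : ℕ} {P : Set (Euc n)} {w : Fin m → Euc n} (h : IsSpanBasis P w) :
    ∃ b : Module.Basis (Fin m) ℝ (vectorSpan ℝ P), ∀ i, (b i : Euc n) = w i := by
  have hmem : ∀ i, w i ∈ vectorSpan ℝ P := by
    intro i
    rw [← h.2]
    exact Submodule.subset_span ⟨i, rfl⟩
  set w' : Fin m → (vectorSpan ℝ P) := fun i => ⟨w i, hmem i⟩ with hw'
  have hcomp : ((vectorSpan ℝ P).subtype) ∘ w' = w := rfl
  have hli : LinearIndependent ℝ w' := by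
    apply LinearIndependent.of_comp (vectorSpan ℝ P).subtype
    rw [hcomp]; exact h.1
  have hsp : Submodule.span ℝ (Set.range w') = ⊤ := by
    apply Submodule.map_injective_of_injective (vectorSpan ℝ P).injective_subtype
    rw [Submodule.map_span, ← Set.range_comp, hcomp, Submodule.map_top,
      Submodule.range_subtype, h.2]
  exact ⟨Module.Basis.mk hli hsp.ge, fun i => by simp [Module.Basis.mk_apply, hw']⟩

lemma alt_eval {n k : ℕ} {V : Submodule ℝ (Euc n)} (b : Module.Basis (Fin k) ℝ V)
    (ω : AlternatingMap ℝ (Euc n) ℝ (Fin k)) (v : Fin k → V) :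
    ω (fun i => (v i : Euc n)) = ω (fun i => (b i : Euc n)) * b.det v := by
  have h := (ω.compLinearMap V.subtype).eq_smul_basis_det b
  have h2 := congrArg (fun F : AlternatingMap ℝ V ℝ (Fin k) => F v) h
  simpa using h2

lemma orients_ne_zero {n k : ℕ} {P : Set (Euc n)} {ω : AlternatingMap ℝ (Euc n) ℝ (Fin k)}
    (h : OrientsOn P ω) (b : Module.Basis (Fin k) ℝ (vectorSpan ℝ P)) :
    ω (fun i => (b i : Euc n)) ≠ 0 := by
  obtain ⟨w, hwmem, hwne⟩ := h
  have hev := alt_eval b ω (fun i => ⟨w i, hwmem i⟩)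
  intro h0
  rw [h0, zero_mul] at hev
  exact hwne hev

lemma subset_of_face_contains {n : ℕ} {P F τ' : Set (Euc n)} {f : Euc n →ₗ[ℝ] ℝ} {c' r : ℝ}
    {η p : Euc n}
    (hF : F = {x ∈ P | f x = c'})
    (hτ'F : τ' ⊆ F) (hp : p ∈ τ')
    (hrelint : ∀ v ∈ vectorSpan ℝ τ', ∀ᶠ t in nhds (0:ℝ), p + t • v ∈ τ')
    (hz : p + r • η ∈ F) (hr : 0 < r)
    (hdecomp : ∀ x ∈ P, ∃ w ∈ vectorSpan ℝ τ', ∃ c : ℝ, x - p = w + c • η) :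
    P ⊆ F := by
  have hpF : p ∈ F := hτ'F hp
  have hfp : f p = c' := by rw [hF] at hpF; exact hpF.2
  have hfη : f η = 0 := by
    have : f (p + r • η) = c' := by rw [hF] at hz; exact hz.2
    rw [map_add, map_smul, hfp, smul_eq_mul] at this
    have : r * f η = 0 := by linarith
    exact (mul_eq_zero.1 this).resolve_left hr.ne'
  have hfW : ∀ v ∈ vectorSpan ℝ τ', f v = 0 := by
    intro v hv
    have hev : ∀ᶠ t in nhds (0:ℝ), t * f v = 0 := by
      refine (hrelint v hv).mono fun t ht => ?_
      have : f (p + t • v) = c' := by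
        have := hτ'F ht; rw [hF] at this; exact this.2
      rw [map_add, map_smul, hfp, smul_eq_mul] at this
      linarith
    have hev' : ∀ᶠ t in nhdsWithin (0:ℝ) (Set.Ioi 0), t * f v = 0 ∧ 0 < t :=
      (hev.filter_mono nhdsWithin_le_nhds).and self_mem_nhdsWithin
    obtain ⟨t, ht, htpos⟩ := hev'.exists
    exact (mul_eq_zero.1 ht).resolve_left htpos.ne'
  intro x hx
  obtain ⟨w, hw, c, hxc⟩ := hdecomp x hx
  rw [hF]
  refine ⟨hx, ?_⟩
  have : f x = f p + f (x - p) := by rw [map_sub]; ring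
  rw [this, hxc, map_add, map_smul, hfW w hw, hfp, hfη, smul_eq_mul]
  ring

lemma eq_of_same_side {n : ℕ} {σ₁ σ₂ τ : Set (Euc n)} {η₁ η₂ : Euc n} {c : ℝ}
    (hconv₁ : Convex ℝ σ₁) (hconv₂ : Convex ℝ σ₂)
    (hτconv : Convex ℝ τ) (hτne : τ.Nonempty)
    (hτ₁ : τ ⊆ σ₁) (hτ₂ : τ ⊆ σ₂)
    (hη₁ : IsInwardNormal τ σ₁ η₁) (hη₂ : IsInwardNormal τ σ₂ η₂)
    (hdec₁ : ∀ x ∈ σ₁, ∀ p ∈ τ, ∃ w ∈ vectorSpan ℝ τ, ∃ s : ℝ, x - p = w + s • η₁)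
    (hdec₂ : ∀ x ∈ σ₂, ∀ p ∈ τ, ∃ w ∈ vectorSpan ℝ τ, ∃ s : ℝ, x - p = w + s • η₁)
    (hη₂eq : η₂ = c • η₁) (hcpos : 0 < c)
    (hIF : (σ₁ ∩ σ₂).Nonempty → IsFaceOf (σ₁ ∩ σ₂) σ₁ ∧ IsFaceOf (σ₁ ∩ σ₂) σ₂) :
    σ₁ = σ₂ := by
  obtain ⟨p, hp, hrelint⟩ := exists_relint hτconv hτne
  have hinnerpos : (0:ℝ) < ⟪η₁, η₁⟫_ℝ :=
    real_inner_self_nonneg.lt_of_ne (fun h => hη₁.1 (inner_self_eq_zero.1 h.symm))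
  have key : ∀ (σ' : Set (Euc n)) (η' : Euc n), τ ⊆ σ' → IsInwardNormal τ σ' η' →
      ∃ y ∈ σ', 0 < ⟪η', y - p⟫_ℝ := by
    intro σ' η' hτσ' hη'
    by_contra hno
    push_neg at hno
    have hall : ∀ y ∈ σ', ⟪η', y - p⟫_ℝ = 0 := fun y hy =>
      le_antisymm (hno y hy) (hη'.2.2.2 p hp y hy)
    have hself : ⟪η', η'⟫_ℝ = 0 := by
      refine inner_vectorSpan_eq_zero ?_ η' hη'.2.1
      intro x hx y hy
      have hxy : x - y = (x - p) - (y - p) := by abel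
      rw [hxy, inner_sub_right, hall x hx, hall y hy]; ring
    exact hη'.1 (inner_self_eq_zero.1 hself)
  obtain ⟨y₁, hy₁, hpos₁⟩ := key σ₁ η₁ hτ₁ hη₁
  obtain ⟨y₂, hy₂, hpos₂'⟩ := key σ₂ η₂ hτ₂ hη₂
  have hpos₂ : 0 < ⟪η₁, y₂ - p⟫_ℝ := by
    rw [hη₂eq, real_inner_smul_left] at hpos₂'
    nlinarith [hpos₂', hcpos]
  obtain ⟨v₁, hv₁, s₁, hs₁⟩ := hdec₁ y₁ hy₁ p hp
  obtain ⟨v₂, hv₂, s₂, hs₂⟩ := hdec₂ y₂ hy₂ p hp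
  have hsgen : ∀ (v : Euc n), v ∈ vectorSpan ℝ τ → ∀ s : ℝ, ∀ y : Euc n,
      y - p = v + s • η₁ → 0 < ⟪η₁, y - p⟫_ℝ → 0 < s := by
    intro v hv s y hyd hypos
    rw [hyd, inner_add_right, real_inner_smul_right, hη₁.2.2.1 v hv, zero_add] at hypos
    nlinarith
  have hs₁pos : 0 < s₁ := hsgen v₁ hv₁ s₁ y₁ hs₁ hpos₁
  have hs₂pos : 0 < s₂ := hsgen v₂ hv₂ s₂ y₂ hs₂ hpos₂
  have hev : ∀ᶠ t in nhdsWithin (0:ℝ) (Set.Ioi 0),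
      ((p + t • (-v₁) ∈ τ ∧ p + t • (-v₂) ∈ τ) ∧ t < 1) ∧ 0 < t := by
    refine Filter.Eventually.and (Filter.Eventually.filter_mono nhdsWithin_le_nhds ?_)
      self_mem_nhdsWithin
    exact ((hrelint (-v₁) (Submodule.neg_mem _ hv₁)).and
      (hrelint (-v₂) (Submodule.neg_mem _ hv₂))).and (gt_mem_nhds one_pos)
  obtain ⟨t, ⟨⟨ha₁, ha₂⟩, htlt⟩, htpos⟩ := hev.exists
  have hmid : ∀ (σ' : Set (Euc n)), Convex ℝ σ' → τ ⊆ σ' →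
      ∀ y ∈ σ', ∀ (v : Euc n) (s : ℝ), y - p = v + s • η₁ → p + t • (-v) ∈ τ →
      p + (t * s / 2) • η₁ ∈ σ' := by
    intro σ' hconv hτσ' y hy v s hyd haτ
    have hb : (1 - t) • p + t • y ∈ σ' :=
      hconv (hτσ' hp) hy (by linarith) htpos.le (by ring)
    have hmid' := hconv (hτσ' haτ) hb (by norm_num : (0:ℝ) ≤ 1/2) (by norm_num : (0:ℝ) ≤ 1/2)
      (by norm_num)
    have heq : (1/2 : ℝ) • (p + t • (-v)) + (1/2 : ℝ) • ((1 - t) • p + t • y)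
        = p + (t * s / 2) • η₁ := by
      have hy' : y = p + v + s • η₁ := by
        have h' := hyd; rw [sub_eq_iff_eq_add] at h'; rw [h']; module
      rw [hy']; module
    rwa [heq] at hmid'
  have hz₁ := hmid σ₁ hconv₁ hτ₁ y₁ hy₁ v₁ s₁ hs₁ ha₁
  have hz₂ := hmid σ₂ hconv₂ hτ₂ y₂ hy₂ v₂ s₂ hs₂ ha₂
  set r : ℝ := min (t * s₁ / 2) (t * s₂ / 2) with hr
  have hrpos : 0 < r := lt_min (by positivity) (by positivity)
  have hshrink : ∀ (σ' : Set (Euc n)), Convex ℝ σ' → τ ⊆ σ' → ∀ s : ℝ, 0 < s →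
      p + (t * s / 2) • η₁ ∈ σ' → r ≤ t * s / 2 → p + r • η₁ ∈ σ' := by
    intro σ' hconv hτσ' s hspos hzmem hrle
    set ρ := t * s / 2 with hρ
    have hρpos : 0 < ρ := by positivity
    have hθ : 0 ≤ r / ρ := by positivity
    have hθ1 : r / ρ ≤ 1 := by
      rw [div_le_one hρpos]; exact hrle
    have hmem := hconv (hτσ' hp) hzmem (by linarith : (0:ℝ) ≤ 1 - r/ρ) hθ (by ring)
    have heq : (1 - r/ρ) • p + (r/ρ) • (p + ρ • η₁) = p + r • η₁ := by
      have hcan : (r/ρ) * ρ = r := div_mul_cancel₀ r hρpos.ne'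
      rw [smul_add, smul_smul, hcan]; module
    rwa [heq] at hmem
  have hzσ₁ : p + r • η₁ ∈ σ₁ := hshrink σ₁ hconv₁ hτ₁ s₁ hs₁pos hz₁ (min_le_left _ _)
  have hzσ₂ : p + r • η₁ ∈ σ₂ := hshrink σ₂ hconv₂ hτ₂ s₂ hs₂pos hz₂ (min_le_right _ _)
  obtain ⟨hF₁, hF₂⟩ := hIF ⟨p + r • η₁, hzσ₁, hzσ₂⟩
  obtain ⟨f₁, c₁, _, hFeq₁⟩ := hF₁
  obtain ⟨f₂, c₂, _, hFeq₂⟩ := hF₂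
  have hsub₁ : σ₁ ⊆ σ₁ ∩ σ₂ :=
    subset_of_face_contains hFeq₁ (subset_inter hτ₁ hτ₂) hp hrelint ⟨hzσ₁, hzσ₂⟩ hrpos
      (fun x hx => hdec₁ x hx p hp)
  have hsub₂ : σ₂ ⊆ σ₁ ∩ σ₂ :=
    subset_of_face_contains hFeq₂ (subset_inter hτ₁ hτ₂) hp hrelint ⟨hzσ₁, hzσ₂⟩ hrpos
      (fun x hx => hdec₂ x hx p hp)
  exact le_antisymm (fun x hx => (hsub₁ hx).2) (fun x hx => (hsub₂ hx).1)

set_option maxHeartbeats 3200000 in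
theorem statement2 {n m : ℕ}
    (σ : Set (Euc n)) (hσ : IsPolytope σ) (hdσ : polyDim σ = m + 1)
    -- `X` is a polyhedral subdivision of `σ`
    (X : PolyComplex n) (hXσ : X.support = σ)
    (σ₁ σ₂ τ : Set (Euc n))
    (h₁ : σ₁ ∈ X.cells (m + 1)) (h₂ : σ₂ ∈ X.cells (m + 1)) (hτ : τ ∈ X.cells m)
    (hne : σ₁ ≠ σ₂)
    (hf₁ : IsFaceOf τ σ₁) (hf₂ : IsFaceOf τ σ₂)
    -- orientations of `σ`, `σ₁`, `σ₂`, `τ`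
    (ωσ : AlternatingMap ℝ (Euc n) ℝ (Fin (m + 1))) (hωσ : OrientsOn σ ωσ)
    (ωσ₁ : AlternatingMap ℝ (Euc n) ℝ (Fin (m + 1))) (hωσ₁ : OrientsOn σ₁ ωσ₁)
    (ωσ₂ : AlternatingMap ℝ (Euc n) ℝ (Fin (m + 1))) (hωσ₂ : OrientsOn σ₂ ωσ₂)
    (ωτ : AlternatingMap ℝ (Euc n) ℝ (Fin m)) (hωτ : OrientsOn τ ωτ)
    -- data computing sign(σ₁,σ) and sign(σ₂,σ)
    (u₁ : Fin (m + 1) → Euc n) (hu₁ : IsSpanBasis σ u₁)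
    (u₂ : Fin (m + 1) → Euc n) (hu₂ : IsSpanBasis σ u₂)
    -- data computing sign(τ,σ₁) and sign(τ,σ₂)
    (η₁ : Euc n) (hη₁ : IsInwardNormal τ σ₁ η₁)
    (w₁ : Fin m → Euc n) (hw₁ : IsSpanBasis τ w₁)
    (η₂ : Euc n) (hη₂ : IsInwardNormal τ σ₂ η₂)
    (w₂ : Fin m → Euc n) (hw₂ : IsSpanBasis τ w₂) :
    relSignVal ωσ ωσ₁ u₁ * facetSignVal ωσ₁ ωτ η₁ w₁ +
      relSignVal ωσ ωσ₂ u₂ * facetSignVal ωσ₂ ωτ η₂ w₂ = 0 := by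
  classical
  -- basic containments
  have hface_sub : ∀ {F P : Set (Euc n)}, IsFaceOf F P → F ⊆ P := by
    rintro F P ⟨f, c, _, rfl⟩ x hx; exact hx.1
  have hτσ₁ : τ ⊆ σ₁ := hface_sub hf₁
  have hτσ₂ : τ ⊆ σ₂ := hface_sub hf₂
  have hσ₁σ : σ₁ ⊆ σ := hXσ ▸ subset_sUnion_of_mem h₁.1
  have hσ₂σ : σ₂ ⊆ σ := hXσ ▸ subset_sUnion_of_mem h₂.1
  -- spans
  have hV₁ : vectorSpan ℝ σ₁ = vectorSpan ℝ σ :=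
    Submodule.eq_of_le_of_finrank_eq (vectorSpan_mono ℝ hσ₁σ) (h₁.2.trans hdσ.symm)
  have hV₂ : vectorSpan ℝ σ₂ = vectorSpan ℝ σ :=
    Submodule.eq_of_le_of_finrank_eq (vectorSpan_mono ℝ hσ₂σ) (h₂.2.trans hdσ.symm)
  have hWV : vectorSpan ℝ τ ≤ vectorSpan ℝ σ :=
    (vectorSpan_mono ℝ hτσ₁).trans hV₁.le
  have hη₁V : η₁ ∈ vectorSpan ℝ σ := hV₁ ▸ hη₁.2.1
  have hη₂V : η₂ ∈ vectorSpan ℝ σ := hV₂ ▸ hη₂.2.1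
  have hη₁W : η₁ ∉ vectorSpan ℝ τ := fun h =>
    hη₁.1 (inner_self_eq_zero.1 (hη₁.2.2.1 η₁ h))
  -- decomposition of the ambient span
  have hinf : vectorSpan ℝ τ ⊓ (ℝ ∙ η₁) = ⊥ := by
    rw [eq_bot_iff]
    rintro x ⟨hxW, hxS⟩
    obtain ⟨d, rfl⟩ := Submodule.mem_span_singleton.1 hxS
    rcases eq_or_ne d 0 with rfl|hd
    · simp
    · exfalso
      apply hη₁W
      have hmem := Submodule.smul_mem (vectorSpan ℝ τ) d⁻¹ hxW
      rwa [smul_smul, inv_mul_cancel₀ hd, one_smul] at hmem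
  have hsup : vectorSpan ℝ τ ⊔ (ℝ ∙ η₁) = vectorSpan ℝ σ := by
    apply Submodule.eq_of_le_of_finrank_eq
    · exact sup_le hWV ((Submodule.span_singleton_le_iff_mem _ _).2 hη₁V)
    · have hcount := Submodule.finrank_sup_add_finrank_inf_eq (vectorSpan ℝ τ) (ℝ ∙ η₁)
      rw [hinf, finrank_bot, finrank_span_singleton hη₁.1] at hcount
      have hWm : Module.finrank ℝ (vectorSpan ℝ τ) = m := hτ.2
      have hVm : Module.finrank ℝ (vectorSpan ℝ σ) = m + 1 := hdσ
      rw [hWm] at hcount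
      rw [hVm]
      omega
  have hdecV : ∀ u ∈ vectorSpan ℝ σ, ∃ w ∈ vectorSpan ℝ τ, ∃ s : ℝ, u = w + s • η₁ := by
    intro u hu
    rw [← hsup] at hu
    obtain ⟨y, hy, z, hz, rfl⟩ := Submodule.mem_sup.1 hu
    obtain ⟨s, rfl⟩ := Submodule.mem_span_singleton.1 hz
    exact ⟨y, hy, s, rfl⟩
  have hdec₁ : ∀ x ∈ σ₁, ∀ p ∈ τ, ∃ w ∈ vectorSpan ℝ τ, ∃ s : ℝ, x - p = w + s • η₁ := by
    intro x hx p hp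
    have : x - p ∈ vectorSpan ℝ σ := by
      rw [← hV₁]
      simpa [vsub_eq_sub] using vsub_mem_vectorSpan ℝ hx (hτσ₁ hp)
    exact hdecV _ this
  have hdec₂ : ∀ x ∈ σ₂, ∀ p ∈ τ, ∃ w ∈ vectorSpan ℝ τ, ∃ s : ℝ, x - p = w + s • η₁ := by
    intro x hx p hp
    have : x - p ∈ vectorSpan ℝ σ := by
      rw [← hV₂]
      simpa [vsub_eq_sub] using vsub_mem_vectorSpan ℝ hx (hτσ₂ hp)
    exact hdecV _ this
  -- η₂ is a negative multiple of η₁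
  obtain ⟨w₀, hw₀, c, hηc⟩ := hdecV η₂ hη₂V
  have hw₀0 : w₀ = 0 := by
    have hz : ⟪w₀, w₀⟫_ℝ = 0 := by
      have h1 : ⟪η₂, w₀⟫_ℝ = 0 := hη₂.2.2.1 w₀ hw₀
      have h2 : ⟪η₁, w₀⟫_ℝ = 0 := hη₁.2.2.1 w₀ hw₀
      have hw0eq : η₂ - c • η₁ = w₀ := by rw [hηc]; abel
      calc ⟪w₀, w₀⟫_ℝ = ⟪η₂ - c • η₁, w₀⟫_ℝ := by rw [hw0eq]
        _ = 0 := by rw [inner_sub_left, real_inner_smul_left, h1, h2]; ring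
    exact inner_self_eq_zero.1 hz
  rw [hw₀0, zero_add] at hηc
  have hc0 : c ≠ 0 := by
    rintro rfl
    rw [zero_smul] at hηc
    exact hη₂.1 hηc
  -- convexity and nonemptiness
  have hconvex : ∀ P ∈ X.faces, Convex ℝ P := by
    intro P hP
    obtain ⟨s, rfl⟩ := X.isPolytope P hP
    exact convex_convexHull ℝ _
  have hclt : c < 0 := by
    rcases hc0.lt_or_gt with h|h
    · exact h
    exfalso
    apply hne
    exact eq_of_same_side (hconvex σ₁ h₁.1) (hconvex σ₂ h₂.1) (hconvex τ hτ.1)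
      (X.nonempty τ hτ.1) hτσ₁ hτσ₂ hη₁ hη₂ hdec₁ hdec₂ hηc h
      (X.inter_face σ₁ h₁.1 σ₂ h₂.1)
  -- ### algebra of orientations
  have hωσ₁' : OrientsOn σ ωσ₁ := by
    obtain ⟨w, hw, hne'⟩ := hωσ₁; exact ⟨w, fun i => hV₁ ▸ hw i, hne'⟩
  have hωσ₂' : OrientsOn σ ωσ₂ := by
    obtain ⟨w, hw, hne'⟩ := hωσ₂; exact ⟨w, fun i => hV₂ ▸ hw i, hne'⟩
  have hbigV : IsSpanBasis σ (Fin.cons η₁ w₁ : Fin (m+1) → Euc n) := by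
    constructor
    · rw [linearIndependent_fin_cons]
      exact ⟨hw₁.1, by rw [hw₁.2]; exact hη₁W⟩
    · rw [Fin.range_cons, Submodule.span_insert, hw₁.2, sup_comm]
      exact hsup
  obtain ⟨bV, hbV⟩ := exists_spanBasis hbigV
  obtain ⟨bW, hbW⟩ := exists_spanBasis hw₁
  obtain ⟨b₁, hb₁⟩ := exists_spanBasis hu₁
  obtain ⟨b₂, hb₂⟩ := exists_spanBasis hu₂
  obtain ⟨bw₂, hbw₂⟩ := exists_spanBasis hw₂
  have hconsV : (fun i => (bV i : Euc n)) = Fin.cons η₁ w₁ := funext hbV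
  have hcoeW : (fun i => (bW i : Euc n)) = w₁ := funext hbW
  have hcoe₁ : (fun i => (b₁ i : Euc n)) = u₁ := funext hb₁
  have hcoe₂ : (fun i => (b₂ i : Euc n)) = u₂ := funext hb₂
  have hcoew₂ : (fun i => (bw₂ i : Euc n)) = w₂ := funext hbw₂
  have ha : ωσ (Fin.cons η₁ w₁) ≠ 0 := hconsV ▸ orients_ne_zero hωσ bV
  have ha₁ : ωσ₁ (Fin.cons η₁ w₁) ≠ 0 := hconsV ▸ orients_ne_zero hωσ₁' bV
  have ha₂ : ωσ₂ (Fin.cons η₁ w₁) ≠ 0 := hconsV ▸ orients_ne_zero hωσ₂' bV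
  have ht : ωτ w₁ ≠ 0 := hcoeW ▸ orients_ne_zero hωτ bW
  have hd₁ : bV.det ⇑b₁ ≠ 0 := (bV.isUnit_det b₁).ne_zero
  have hd₂ : bV.det ⇑b₂ ≠ 0 := (bV.isUnit_det b₂).ne_zero
  have hdw : bW.det ⇑bw₂ ≠ 0 := (bW.isUnit_det bw₂).ne_zero
  have hval1 : ωσ u₁ = ωσ (Fin.cons η₁ w₁) * bV.det ⇑b₁ := by
    rw [← hcoe₁, ← hconsV]; exact alt_eval bV ωσ ⇑b₁
  have hval2 : ωσ₁ u₁ = ωσ₁ (Fin.cons η₁ w₁) * bV.det ⇑b₁ := by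
    rw [← hcoe₁, ← hconsV]; exact alt_eval bV ωσ₁ ⇑b₁
  have hval5 : ωσ u₂ = ωσ (Fin.cons η₁ w₁) * bV.det ⇑b₂ := by
    rw [← hcoe₂, ← hconsV]; exact alt_eval bV ωσ ⇑b₂
  have hval6 : ωσ₂ u₂ = ωσ₂ (Fin.cons η₁ w₁) * bV.det ⇑b₂ := by
    rw [← hcoe₂, ← hconsV]; exact alt_eval bV ωσ₂ ⇑b₂
  have hval8 : ωτ w₂ = ωτ w₁ * bW.det ⇑bw₂ := by
    rw [← hcoew₂, ← hcoeW]; exact alt_eval bW ωτ ⇑bw₂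
  -- the crucial evaluation on the second facet data
  set vW₂ : Fin m → (vectorSpan ℝ σ) := fun j => Submodule.inclusion hWV (bw₂ j) with hvW₂
  have hfam : Fin.cons (⟨η₁, hη₁V⟩ : vectorSpan ℝ σ)
      (fun j => Submodule.inclusion hWV (bW j)) = ⇑bV := by
    funext i
    refine Fin.cases ?_ (fun j => ?_) i
    · apply Subtype.ext
      simp [hbV 0]
    · apply Subtype.ext
      have h1 := hbV j.succ
      rw [Fin.cons_succ] at h1
      simp [h1, hbW j]
  set F : AlternatingMap ℝ (vectorSpan ℝ τ) ℝ (Fin m) :=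
    ((bV.det.curryLeft ⟨η₁, hη₁V⟩).compLinearMap (Submodule.inclusion hWV)) with hFdef
  have hFbW1 : F ⇑bW = 1 := by
    have h' : F ⇑bW
        = bV.det (Fin.cons ⟨η₁, hη₁V⟩ (fun j => Submodule.inclusion hWV (bW j))) := rfl
    rw [h', hfam, Module.Basis.det_self]
  have hFeqdet : F = bW.det := by
    have h' := F.eq_smul_basis_det bW
    rw [hFbW1, one_smul] at h'
    exact h'
  have hcross : bV.det (Fin.cons ⟨η₁, hη₁V⟩ vW₂) = bW.det ⇑bw₂ := by
    have h' : F ⇑bw₂ = bV.det (Fin.cons ⟨η₁, hη₁V⟩ vW₂) := rfl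
    rw [← h', hFeqdet]
  set v₂fam : Fin (m+1) → (vectorSpan ℝ σ) := Fin.cons ⟨η₂, hη₂V⟩ vW₂ with hv₂fam
  have hv₂coe : (fun i => (v₂fam i : Euc n)) = Fin.cons η₂ w₂ := by
    funext i
    refine Fin.cases ?_ (fun j => ?_) i
    · simp [hv₂fam]
    · simp [hv₂fam, hvW₂, hbw₂ j]
  have hval7 : ωσ₂ (Fin.cons η₂ w₂) = ωσ₂ (Fin.cons η₁ w₁) * (c * bW.det ⇑bw₂) := by
    rw [← hv₂coe, alt_eval bV ωσ₂ v₂fam, hconsV]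
    congr 1
    have hsub : (⟨η₂, hη₂V⟩ : vectorSpan ℝ σ) = c • ⟨η₁, hη₁V⟩ := Subtype.ext (by simp [hηc])
    rw [hv₂fam, hsub]
    have hsmul := bV.det.toMultilinearMap.cons_smul vW₂ c (⟨η₁, hη₁V⟩ : vectorSpan ℝ σ)
    rw [show ((bV.det) (Fin.cons (c • (⟨η₁, hη₁V⟩ : vectorSpan ℝ σ)) vW₂))
        = c • ((bV.det) (Fin.cons (⟨η₁, hη₁V⟩ : vectorSpan ℝ σ) vW₂)) from hsmul,
      hcross, smul_eq_mul]
  -- final sign computation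
  simp only [relSignVal, facetSignVal]
  rw [hval1, hval2, hval5, hval6, hval7, hval8]
  simp only [sign_mul']
  rw [Real.sign_of_neg hclt]
  have hsq : ∀ x : ℝ, x ≠ 0 → Real.sign x * Real.sign x = 1 := by
    intro x hx
    rcases Real.sign_apply_eq_of_ne_zero x hx with h|h <;> rw [h] <;> norm_num
  have q1 := hsq _ ha₁
  have q2 := hsq _ hd₁
  have q3 := hsq _ ha₂
  have q4 := hsq _ hd₂
  have q5 := hsq _ hdw
  set sa := Real.sign (ωσ (Fin.cons η₁ w₁))
  set st' := Real.sign (ωτ w₁)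
  set sD₁ := Real.sign (bV.det ⇑b₁)
  set sD₂ := Real.sign (bV.det ⇑b₂)
  set sd := Real.sign (bW.det ⇑bw₂)
  linear_combination (sa * st' * sD₁ * sD₁) * q1 + (sa * st') * q2
    - (sa * st' * sD₂ * sD₂ * sd * sd) * q3 - (sa * st' * sd * sd) * q4 - (sa * st') * q5



end
end

section
/- Let P and Q be polytopes in ℝ^n of the same dimension k ≥ 1 with the same affine hull A, and suppose F := P ∩ Q is a face of both P and Q and has dimension k − 1. Then P and Q lie in opposite closed halfspaces of A bounded by the affine hull of F: there exists a nonzero vector η in the direction space of A, orthogonal to the direction space of the affine hull of F, such that ⟨η, x − p⟩ ≥ 0 for all x ∈ P and ⟨η, y − p⟩ ≤ 0 for all y ∈ Q, where p is any point of F. -/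
open Set
open scoped InnerProductSpace

noncomputable section

open Module

/-- kernel identification -/
lemma ker_eq_aux {n : ℕ} (V W : Submodule ℝ (Euc n)) (hWV : W ≤ V)
    (hrank : finrank ℝ W + 1 = finrank ℝ V)
    (f : Euc n →ₗ[ℝ] ℝ)
    (hfW : ∀ w ∈ W, f w = 0) (hfV : ∃ v ∈ V, f v ≠ 0) :
    ∀ v ∈ V, f v = 0 → v ∈ W := by
  obtain ⟨e, heV, hfe⟩ := hfV
  set K : Submodule ℝ (Euc n) := V ⊓ LinearMap.ker f with hK
  have hWK : W ≤ K := le_inf hWV (fun w hw => hfW w hw)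
  have hKV : K < V := by
    refine lt_of_le_of_ne inf_le_left (fun h => hfe ?_)
    have : e ∈ K := h ▸ heV
    exact this.2
  have h1 : finrank ℝ K < finrank ℝ V := Submodule.finrank_lt_finrank_of_lt hKV
  have h2 : finrank ℝ W ≤ finrank ℝ K := Submodule.finrank_mono hWK
  have : W = K := Submodule.eq_of_le_of_finrank_le hWK (by omega)
  intro v hv hfv
  rw [this]
  exact ⟨hv, hfv⟩

/-- proportionality of two functionals vanishing on a codim-1 subspace -/
lemma prop_aux {n : ℕ} (V W : Submodule ℝ (Euc n)) (hWV : W ≤ V)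
    (hrank : finrank ℝ W + 1 = finrank ℝ V)
    (f g : Euc n →ₗ[ℝ] ℝ)
    (hfW : ∀ w ∈ W, f w = 0) (hgW : ∀ w ∈ W, g w = 0)
    (hfV : ∃ v ∈ V, f v ≠ 0) (hgV : ∃ v ∈ V, g v ≠ 0) :
    ∃ a : ℝ, a ≠ 0 ∧ ∀ v ∈ V, g v = a * f v := by
  obtain ⟨e, heV, hfe⟩ := hfV
  have hker := ker_eq_aux V W hWV hrank f hfW ⟨e, heV, hfe⟩
  have hmain : ∀ v ∈ V, g v = (g e / f e) * f v := by
    intro v hv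
    have h1 : v - (f v / f e) • e ∈ W := by
      refine hker _ (V.sub_mem hv (V.smul_mem _ heV)) ?_
      simp only [map_sub, map_smul, smul_eq_mul]
      field_simp
      ring
    have h2 := hgW _ h1
    rw [map_sub, map_smul, smul_eq_mul, sub_eq_zero] at h2
    rw [h2]; field_simp
  refine ⟨g e / f e, ?_, hmain⟩
  obtain ⟨v₀, hv₀V, hgv₀⟩ := hgV
  intro ha
  exact hgv₀ (by rw [hmain v₀ hv₀V, ha, zero_mul])

lemma relint_line {n : ℕ} (F : Set (Euc n)) (p u : Euc n)
    (hp : p ∈ intrinsicInterior ℝ F) (hu : u ∈ vectorSpan ℝ F) :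
    ∃ δ > 0, ∀ s : ℝ, |s| < δ → p + s • u ∈ F := by
  obtain ⟨q, hq, hqp⟩ := mem_intrinsicInterior.1 hp
  have hmem : ∀ s : ℝ, (q : Euc n) + s • u ∈ affineSpan ℝ F := by
    intro s
    have h1 : s • u ∈ (affineSpan ℝ F).direction := by
      rw [direction_affineSpan]; exact Submodule.smul_mem _ s hu
    have := AffineSubspace.vadd_mem_of_mem_direction h1 q.2
    rwa [vadd_eq_add, add_comm] at this
  set γ : ℝ → affineSpan ℝ F := fun s => ⟨(q : Euc n) + s • u, hmem s⟩ with hγ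
  have hcont : Continuous γ := by
    apply Continuous.subtype_mk
    exact continuous_const.add (continuous_id.smul continuous_const)
  have hopen : IsOpen (γ ⁻¹' interior (((↑) : affineSpan ℝ F → Euc n) ⁻¹' F)) :=
    isOpen_interior.preimage hcont
  have h0 : (0 : ℝ) ∈ γ ⁻¹' interior (((↑) : affineSpan ℝ F → Euc n) ⁻¹' F) := by
    have : γ 0 = q := by ext; simp [hγ]
    simpa [this] using hq
  obtain ⟨δ, hδ, hball⟩ := Metric.isOpen_iff.1 hopen 0 h0
  refine ⟨δ, hδ, fun s hs => ?_⟩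
  have : γ s ∈ interior (((↑) : affineSpan ℝ F → Euc n) ⁻¹' F) := by
    apply hball
    simpa [Real.dist_eq] using hs
  have := interior_subset this
  simp only [mem_preimage, hγ] at this
  rwa [← hqp]

lemma comb_eq {E : Type*} [AddCommGroup E] [Module ℝ E] (p x y u : E) (ε cx cy : ℝ)
    (hu : u = cy • (y - p) - cx • (x - p)) (hne : 1 - ε * cy ≠ 0) :
    (1 - ε * cy) • (p + (-(ε / (1 - ε * cy))) • u) + (ε * cy) • y
      = (1 - ε * cx) • p + (ε * cx) • x := by
  subst hu
  match_scalars <;> field_simp <;> ring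

lemma contra {n : ℕ} (P Q : Set (Euc n)) (hPc : Convex ℝ P) (hQc : Convex ℝ Q)
    (θ : Euc n →ₗ[ℝ] ℝ) (p : Euc n) (hp : p ∈ intrinsicInterior ℝ (P ∩ Q))
    (hθQ : ∀ y ∈ Q, θ y ≤ θ p)
    (x₀ : Euc n) (hx₀ : x₀ ∈ P) (hx₀' : θ x₀ < θ p)
    (y₀ : Euc n) (hy₀ : y₀ ∈ Q) (hy₀' : θ y₀ < θ p)
    (hFθ : ∀ z ∈ P ∩ Q, θ z = θ p)
    (huW : ((θ p - θ y₀)⁻¹ • (y₀ - p) - (θ p - θ x₀)⁻¹ • (x₀ - p)) ∈ vectorSpan ℝ (P ∩ Q)) :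
    False := by
  have hpF : p ∈ P ∩ Q := intrinsicInterior_subset hp
  set hx : ℝ := θ p - θ x₀ with hhx
  set hy : ℝ := θ p - θ y₀ with hhy
  have hxpos : 0 < hx := by simp [hhx]; linarith
  have hypos : 0 < hy := by simp [hhy]; linarith
  set u : Euc n := hy⁻¹ • (y₀ - p) - hx⁻¹ • (x₀ - p) with hu
  obtain ⟨δ, hδ, hball⟩ := relint_line (P ∩ Q) p u hp huW
  set ε : ℝ := min (min (hx / 2) (hy / 2)) (δ / 4) with hε
  have hεpos : 0 < ε := by
    apply lt_min (lt_min (by linarith) (by linarith)) (by linarith)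
  have hεx : ε ≤ hx / 2 := le_trans (min_le_left _ _) (min_le_left _ _)
  have hεy : ε ≤ hy / 2 := le_trans (min_le_left _ _) (min_le_right _ _)
  have hεδ : ε ≤ δ / 4 := min_le_right _ _
  set t : ℝ := ε / hx with ht
  set t' : ℝ := ε / hy with ht'
  have htpos : 0 < t := div_pos hεpos hxpos
  have ht'pos : 0 < t' := div_pos hεpos hypos
  have ht2 : t ≤ 1 / 2 := by
    rw [ht, div_le_iff₀ hxpos]; linarith
  have ht'2 : t' ≤ 1 / 2 := by
    rw [ht', div_le_iff₀ hypos]; linarith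
  have hμ'pos : (0 : ℝ) < 1 - t' := by linarith
  set s₀ : ℝ := -(ε / (1 - t')) with hs₀
  have hbF : p + s₀ • u ∈ P ∩ Q := by
    apply hball
    rw [hs₀, abs_neg, abs_of_pos (div_pos hεpos hμ'pos)]
    rw [div_lt_iff₀ hμ'pos]
    nlinarith
  set b : Euc n := p + s₀ • u with hb
  set ζ : Euc n := (1 - t) • p + t • x₀ with hζ
  have hζP : ζ ∈ P := hPc hpF.1 hx₀ (by linarith) (le_of_lt htpos) (by ring)
  have hζeq : ζ = (1 - t') • b + t' • y₀ := by
    have h1 : t = ε * hx⁻¹ := by rw [ht, div_eq_mul_inv]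
    have h2 : t' = ε * hy⁻¹ := by rw [ht', div_eq_mul_inv]
    have h3 := comb_eq p x₀ y₀ u ε hx⁻¹ hy⁻¹ hu (by rw [← h2]; exact ne_of_gt hμ'pos)
    rw [hζ, hb, hs₀, h1, h2]
    rw [← h2, ← h1] at h3
    exact h3.symm
  have hζQ : ζ ∈ Q := by
    rw [hζeq]
    exact hQc hbF.2 hy₀ (le_of_lt hμ'pos) (le_of_lt ht'pos) (by ring)
  have := hFθ ζ ⟨hζP, hζQ⟩
  rw [hζ, map_add, map_smul, map_smul, smul_eq_mul, smul_eq_mul] at this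
  nlinarith [mul_pos htpos (sub_pos.2 hx₀'), this]

set_option maxHeartbeats 2000000 in
theorem statement3 {n k : ℕ} (hk : 1 ≤ k)
    (P Q : Set (Euc n)) (hP : IsPolytope P) (hQ : IsPolytope Q)
    (hdP : polyDim P = k) (hdQ : polyDim Q = k)
    (hA : affineSpan ℝ P = affineSpan ℝ Q)
    (hFP : IsFaceOf (P ∩ Q) P) (hFQ : IsFaceOf (P ∩ Q) Q)
    (hdF : polyDim (P ∩ Q) = k - 1) :
    ∃ η : Euc n, η ≠ 0 ∧ η ∈ vectorSpan ℝ P ∧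
      (∀ w ∈ vectorSpan ℝ (P ∩ Q), ⟪η, w⟫_ℝ = 0) ∧
      ∀ p ∈ P ∩ Q, (∀ x ∈ P, 0 ≤ ⟪η, x - p⟫_ℝ) ∧ (∀ y ∈ Q, ⟪η, y - p⟫_ℝ ≤ 0) := by
  obtain ⟨f, c, hfP, hF⟩ := hFP
  obtain ⟨g, d, hgQ, hG⟩ := hFQ
  have hPc : Convex ℝ P := by obtain ⟨s, rfl⟩ := hP; exact convex_convexHull ℝ _
  have hQc : Convex ℝ Q := by obtain ⟨s, rfl⟩ := hQ; exact convex_convexHull ℝ _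
  set V : Submodule ℝ (Euc n) := vectorSpan ℝ P with hV
  set W : Submodule ℝ (Euc n) := vectorSpan ℝ (P ∩ Q) with hW
  have hQV : vectorSpan ℝ Q = V := by
    rw [hV, ← direction_affineSpan, ← direction_affineSpan, hA]
  have hWV : W ≤ V := vectorSpan_mono ℝ inter_subset_left
  have frV : finrank ℝ V = k := hdP
  have frW : finrank ℝ W = k - 1 := hdF
  have hrank : finrank ℝ W + 1 = finrank ℝ V := by rw [frV, frW]; omega
  have hWlt : W < V := lt_of_le_of_ne hWV (fun h => by rw [h, frV] at frW; omega)
  obtain ⟨v, hvV, hvW⟩ := SetLike.exists_of_lt hWlt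
  have hproj : ((W.orthogonalProjectionOnto v : Euc n)) ∈ W := (W.orthogonalProjectionOnto v).2
  set η : Euc n := v - (W.orthogonalProjectionOnto v : Euc n) with hη
  have hηV : η ∈ V := V.sub_mem hvV (hWV hproj)
  have hηW : ∀ w ∈ W, ⟪η, w⟫_ℝ = 0 := by
    intro w hw
    rw [real_inner_comm]
    exact (Submodule.mem_orthogonal W η).1 (Submodule.sub_starProjection_mem_orthogonal (K := W) v) w hw
  have hη0 : η ≠ 0 := by
    intro h
    rw [hη, sub_eq_zero] at h
    exact hvW (h ▸ hproj)
  by_cases hFne : (P ∩ Q).Nonempty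
  swap
  · exact ⟨η, hη0, hηV, hηW, fun p hp => absurd ⟨p, hp⟩ hFne⟩
  have hFc : Convex ℝ (P ∩ Q) := hPc.inter hQc
  obtain ⟨p₀, hp₀⟩ := Set.Nonempty.intrinsicInterior hFc hFne
  have hp₀F : p₀ ∈ P ∩ Q := intrinsicInterior_subset hp₀
  have hfmem : ∀ z ∈ P ∩ Q, f z = c := fun z hz => (hF ▸ hz : z ∈ {x ∈ P | f x = c}).2
  have hgmem : ∀ z ∈ P ∩ Q, g z = d := fun z hz => (hG ▸ hz : z ∈ {x ∈ Q | g x = d}).2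
  have hmemPV : ∀ x ∈ P, ∀ p ∈ P, x - p ∈ V := by
    intro x hx p hp
    have := vsub_mem_vectorSpan ℝ hx hp
    rwa [vsub_eq_sub] at this
  have hmemQV : ∀ y ∈ Q, ∀ p ∈ Q, y - p ∈ V := by
    intro y hy p hp
    have h := vsub_mem_vectorSpan ℝ hy hp
    rw [vsub_eq_sub] at h
    exact hQV ▸ h
  have hfW : ∀ w ∈ W, f w = 0 := by
    intro w hw
    rw [hW, vectorSpan_def] at hw
    have hsub : P ∩ Q -ᵥ P ∩ Q ⊆ (LinearMap.ker f : Set (Euc n)) := by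
      rintro w ⟨a', ha', b', hb', rfl⟩
      simp only [SetLike.mem_coe, LinearMap.mem_ker, vsub_eq_sub, map_sub]
      rw [hfmem a' ha', hfmem b' hb', sub_self]
    exact (Submodule.span_le.2 hsub) hw
  have hgW : ∀ w ∈ W, g w = 0 := by
    intro w hw
    rw [hW, vectorSpan_def] at hw
    have hsub : P ∩ Q -ᵥ P ∩ Q ⊆ (LinearMap.ker g : Set (Euc n)) := by
      rintro w ⟨a', ha', b', hb', rfl⟩
      simp only [SetLike.mem_coe, LinearMap.mem_ker, vsub_eq_sub, map_sub]
      rw [hgmem a' ha', hgmem b' hb', sub_self]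
    exact (Submodule.span_le.2 hsub) hw
  have hxex : ∃ x ∈ P, f x < c := by
    by_contra h
    push_neg at h
    have hPF : P ∩ Q = P := by
      rw [hF]
      exact Set.ext fun z => ⟨fun hz => hz.1,
        fun hz => ⟨hz, le_antisymm (hfP z hz) (h z hz)⟩⟩
    have hWVeq : W = V := by rw [hW, hPF]
    rw [hWVeq, frV] at frW
    omega
  have hyex : ∃ y ∈ Q, g y < d := by
    by_contra h
    push_neg at h
    have hQF : P ∩ Q = Q := by
      rw [hG]
      exact Set.ext fun z => ⟨fun hz => hz.1,
        fun hz => ⟨hz, le_antisymm (hgQ z hz) (h z hz)⟩⟩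
    have hWVeq : W = V := by rw [hW, hQF, hQV]
    rw [hWVeq, frV] at frW
    omega
  obtain ⟨x₀, hx₀P, hx₀c⟩ := hxex
  obtain ⟨y₀, hy₀Q, hy₀d⟩ := hyex
  set θ : Euc n →ₗ[ℝ] ℝ := (innerSL ℝ η).toLinearMap with hθdef
  have hθapp : ∀ w, θ w = ⟪η, w⟫_ℝ := fun w => rfl
  have hθW : ∀ w ∈ W, θ w = 0 := fun w hw => by rw [hθapp]; exact hηW w hw
  have hfV : ∃ v ∈ V, f v ≠ 0 :=
    ⟨x₀ - p₀, hmemPV x₀ hx₀P p₀ hp₀F.1, by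
      rw [map_sub, hfmem p₀ hp₀F]; intro h; rw [sub_eq_zero] at h; exact absurd h (ne_of_lt hx₀c)⟩
  have hgV : ∃ v ∈ V, g v ≠ 0 :=
    ⟨y₀ - p₀, hmemQV y₀ hy₀Q p₀ hp₀F.2, by
      rw [map_sub, hgmem p₀ hp₀F]; intro h; rw [sub_eq_zero] at h; exact absurd h (ne_of_lt hy₀d)⟩
  have hθV : ∃ v ∈ V, θ v ≠ 0 :=
    ⟨η, hηV, by rw [hθapp]; exact fun h => hη0 (inner_self_eq_zero.1 h)⟩
  obtain ⟨a, ha0, hfa⟩ := prop_aux V W hWV hrank f θ hfW hθW hfV hθV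
  obtain ⟨b, hb0, hgb⟩ := prop_aux V W hWV hrank g θ hgW hθW hgV hθV
  have hθPd : ∀ x ∈ P, ∀ p ∈ P ∩ Q, θ (x - p) = a * (f x - c) := by
    intro x hx p hp
    rw [hfa _ (hmemPV x hx p hp.1), map_sub, hfmem p hp]
  have hθQd : ∀ y ∈ Q, ∀ p ∈ P ∩ Q, θ (y - p) = b * (g y - d) := by
    intro y hy p hp
    rw [hgb _ (hmemQV y hy p hp.2), map_sub, hgmem p hp]
  have hsign : a * b < 0 := by
    by_contra hab
    push_neg at hab
    have habpos : 0 < a * b := lt_of_le_of_ne hab (Ne.symm (mul_ne_zero ha0 hb0))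
    have key : ∀ s t : ℝ, a * s = b * t → t ≤ 0 → s ≤ 0 := by
      intro s t h1 h2
      by_contra hs
      push_neg at hs
      have h3 : (a * b) * t ≤ 0 := mul_nonpos_iff.2 (Or.inl ⟨habpos.le, h2⟩)
      have h4 : a * a * s ≤ 0 := by
        have he : a * a * s = (a * b) * t := by rw [mul_assoc, h1]; ring
        rw [he]; exact h3
      have h5 : 0 < a * a * s := mul_pos (mul_self_pos.2 ha0) hs
      linarith
    have key' : ∀ s t : ℝ, a * s = b * t → t < 0 → s < 0 := by
      intro s t h1 h2
      by_contra hs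
      push_neg at hs
      have h3 : (a * b) * t < 0 := mul_neg_of_pos_of_neg habpos h2
      have h4 : 0 ≤ a * a * s := mul_nonneg (mul_self_pos.2 ha0).le hs
      have he : a * a * s = (a * b) * t := by rw [mul_assoc, h1]; ring
      linarith [he ▸ h4]
    have hfQ : ∀ y ∈ Q, f (y - p₀) ≤ 0 := by
      intro y hy
      have h1 : a * f (y - p₀) = b * (g y - d) :=
        (hfa _ (hmemQV y hy p₀ hp₀F.2)).symm.trans (hθQd y hy p₀ hp₀F)
      exact key _ _ h1 (sub_nonpos.2 (hgQ y hy))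
    have hfy₀ : f (y₀ - p₀) < 0 := by
      have h1 : a * f (y₀ - p₀) = b * (g y₀ - d) :=
        (hfa _ (hmemQV y₀ hy₀Q p₀ hp₀F.2)).symm.trans (hθQd y₀ hy₀Q p₀ hp₀F)
      exact key' _ _ h1 (sub_neg.2 hy₀d)
    have hfp₀ : f p₀ = c := hfmem p₀ hp₀F
    have hQle : ∀ y ∈ Q, f y ≤ f p₀ := by
      intro y hy
      have := hfQ y hy
      rw [map_sub] at this
      linarith
    have hx₀lt : f x₀ < f p₀ := by rw [hfp₀]; exact hx₀c
    have hy₀lt : f y₀ < f p₀ := by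
      rw [map_sub] at hfy₀; linarith
    have hFf : ∀ z ∈ P ∩ Q, f z = f p₀ := fun z hz => by rw [hfmem z hz, hfp₀]
    have huV : ((f p₀ - f y₀)⁻¹ • (y₀ - p₀) - (f p₀ - f x₀)⁻¹ • (x₀ - p₀)) ∈ V :=
      V.sub_mem (V.smul_mem _ (hmemQV y₀ hy₀Q p₀ hp₀F.2))
        (V.smul_mem _ (hmemPV x₀ hx₀P p₀ hp₀F.1))
    have hufzero : f ((f p₀ - f y₀)⁻¹ • (y₀ - p₀) - (f p₀ - f x₀)⁻¹ • (x₀ - p₀)) = 0 := by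
      have hy' : f p₀ - f y₀ ≠ 0 := ne_of_gt (by linarith)
      have hx' : f p₀ - f x₀ ≠ 0 := ne_of_gt (by linarith)
      rw [map_sub, map_smul, map_smul, map_sub, map_sub, smul_eq_mul, smul_eq_mul]
      field_simp
      ring
    have huW := ker_eq_aux V W hWV hrank f hfW hfV _ huV hufzero
    exact contra P Q hPc hQc f p₀ hp₀ hQle x₀ hx₀P hx₀lt y₀ hy₀Q hy₀lt hFf huW
  have hker := ker_eq_aux V W hWV hrank θ hθW hθV
  rcases lt_or_gt_of_ne ha0 with haneg | hapos
  · have hbpos : 0 < b := by nlinarith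
    refine ⟨η, hη0, hηV, hηW, fun p hp => ⟨?_, ?_⟩⟩
    · intro x hx
      have h1 : ⟪η, x - p⟫_ℝ = a * (f x - c) := (hθapp _).symm.trans (hθPd x hx p hp)
      rw [h1]
      nlinarith [hfP x hx]
    · intro y hy
      have h1 : ⟪η, y - p⟫_ℝ = b * (g y - d) := (hθapp _).symm.trans (hθQd y hy p hp)
      rw [h1]
      nlinarith [hgQ y hy]
  · have hbneg : b < 0 := by nlinarith
    refine ⟨-η, neg_ne_zero.2 hη0, V.neg_mem hηV,
      fun w hw => by rw [inner_neg_left, hηW w hw, neg_zero], fun p hp => ⟨?_, ?_⟩⟩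
    · intro x hx
      have h1 : ⟪η, x - p⟫_ℝ = a * (f x - c) := (hθapp _).symm.trans (hθPd x hx p hp)
      rw [inner_neg_left, h1]
      nlinarith [hfP x hx]
    · intro y hy
      have h1 : ⟪η, y - p⟫_ℝ = b * (g y - d) := (hθapp _).symm.trans (hθQd y hy p hp)
      rw [inner_neg_left, h1]
      nlinarith [hgQ y hy]


end
end

section
/- Let V ⊆ ℝ^n be a linear subspace of dimension k ≥ 2 and W ⊂ V a linear subspace of dimension k − 1. Let ω be a nonzero alternating k-linear form on V, ω' a nonzero alternating (k−1)-linear form on W, and f a nonzero linear functional on V vanishing on W. If η₁, η₂ ∈ V satisfy f(η₁) > 0 and f(η₂) > 0, and (w₁,…,w_{k−1}) and (u₁,…,u_{k−1}) are bases of W, then sgn(ω(η₁, w₁, …, w_{k−1}))·sgn(ω'(w₁, …, w_{k−1})) = sgn(ω(η₂, u₁, …, u_{k−1}))·sgn(ω'(u₁, …, u_{k−1})). (In other words, the sign sign(τ,σ) attached to a facet of an oriented polytope is independent of the choice of basis of span(τ) and of the choice of inward-pointing normal vector.) -/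
noncomputable section

private lemma real_sign_mul (x y : ℝ) : Real.sign (x * y) = Real.sign x * Real.sign y := by
  rcases lt_trichotomy x 0 with hx | hx | hx <;> rcases lt_trichotomy y 0 with hy | hy | hy <;>
    simp [hx, hy, Real.sign_of_pos, Real.sign_of_neg, Real.sign_zero,
      mul_pos_of_neg_of_neg, mul_neg_of_neg_of_pos, mul_neg_of_pos_of_neg, mul_pos]

/-- The sign `sign(τ,σ)` attached to a facet of an oriented polytope is independent of the
choice of basis of `span τ` and of the choice of inward-pointing normal vector.  Here
`k = m + 1 ≥ 2`, `V` plays the role of `span σ` (dimension `k`), `W ⊂ V` the role of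
`span τ` (dimension `k - 1`), `ω = ω_σ`, `ω' = ω_τ`, and `f` is a nonzero linear functional
vanishing on `W`, so that `f(η) > 0` singles out the inward-pointing side. -/
theorem statement4 {n m : ℕ} (hm : 1 ≤ m)
    (V W : Submodule ℝ (Fin n → ℝ)) (hWV : W ≤ V)
    (hdV : Module.finrank ℝ ↥V = m + 1) (hdW : Module.finrank ℝ ↥W = m)
    (ω : AlternatingMap ℝ ↥V ℝ (Fin (m + 1))) (hω : ω ≠ 0)
    (ω' : AlternatingMap ℝ ↥W ℝ (Fin m)) (hω' : ω' ≠ 0)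
    (f : ↥V →ₗ[ℝ] ℝ) (hf : f ≠ 0) (hfW : ∀ x : ↥W, f (Submodule.inclusion hWV x) = 0)
    (η₁ η₂ : ↥V) (hη₁ : 0 < f η₁) (hη₂ : 0 < f η₂)
    (w u : Fin m → ↥W)
    (hw : LinearIndependent ℝ w ∧ Submodule.span ℝ (Set.range w) = ⊤)
    (hu : LinearIndependent ℝ u ∧ Submodule.span ℝ (Set.range u) = ⊤) :
    Real.sign (ω (Fin.cons η₁ fun i => Submodule.inclusion hWV (w i))) *
        Real.sign (ω' w) =
      Real.sign (ω (Fin.cons η₂ fun i => Submodule.inclusion hWV (u i))) *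
        Real.sign (ω' u) := by
  classical
  set ι : ↥W →ₗ[ℝ] ↥V := Submodule.inclusion hWV with hι
  have hιinj : Function.Injective ι := Submodule.inclusion_injective hWV
  -- bases of W
  let bw : Module.Basis (Fin m) ℝ ↥W := Module.Basis.mk hw.1 hw.2.ge
  have hbw : ⇑bw = w := Module.Basis.coe_mk _ _
  let bu : Module.Basis (Fin m) ℝ ↥W := Module.Basis.mk hu.1 hu.2.ge
  have hbu : ⇑bu = u := Module.Basis.coe_mk _ _
  set d : ℝ := bw.det u with hd
  have hdne : d ≠ 0 := by
    have := bw.isUnit_det bu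
    rw [hbu] at this
    exact this.ne_zero
  -- ω' on the two bases
  have hωw : ω' = ω' w • bw.det := by
    have := ω'.eq_smul_basis_det bw
    rwa [hbw] at this
  have hY : ω' u = ω' w * d := by
    conv_lhs => rw [hωw]
    simp [smul_eq_mul, hd]
  have hYne : ω' w ≠ 0 := by
    intro h
    apply hω'
    rw [hωw, h, zero_smul]
  -- range ι = ker f
  have hrange_le : LinearMap.range ι ≤ LinearMap.ker f := by
    rintro x ⟨y, rfl⟩
    exact hfW y
  have hkerne : LinearMap.ker f ≠ ⊤ := fun h => hf (LinearMap.ker_eq_top.mp h)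
  have hkerlt : Module.finrank ℝ (LinearMap.ker f) < m + 1 := by
    rw [← hdV]
    exact Submodule.finrank_lt hkerne
  have hrι : Module.finrank ℝ (LinearMap.range ι) = m := by
    rw [LinearMap.finrank_range_of_inj hιinj, hdW]
  have hkr : LinearMap.range ι = LinearMap.ker f := by
    apply Submodule.eq_of_le_of_finrank_le hrange_le
    rw [hrι]
    omega
  -- spans
  have hspan_u : Submodule.span ℝ (Set.range fun i => ι (u i)) = LinearMap.range ι := by
    rw [show (Set.range fun i => ι (u i)) = ι '' Set.range u by rw [← Set.range_comp]; rfl,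
      ← Submodule.map_span, hu.2, Submodule.map_top]
  have hspan_w : Submodule.span ℝ (Set.range fun i => ι (w i)) = LinearMap.range ι := by
    rw [show (Set.range fun i => ι (w i)) = ι '' Set.range w by rw [← Set.range_comp]; rfl,
      ← Submodule.map_span, hw.2, Submodule.map_top]
  -- basis of V from η₁ and w
  have hliw : LinearIndependent ℝ fun i => ι (w i) :=
    hw.1.map' ι (Submodule.ker_inclusion _ _ _)
  have hη₁mem : η₁ ∉ Submodule.span ℝ (Set.range fun i => ι (w i)) := by
    rw [hspan_w, hkr]
    intro h
    rw [LinearMap.mem_ker] at h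
    rw [h] at hη₁
    exact lt_irrefl 0 hη₁
  have hliV : LinearIndependent ℝ (Fin.cons η₁ fun i => ι (w i)) :=
    linearIndependent_fin_cons.mpr ⟨hliw, hη₁mem⟩
  let bV : Module.Basis (Fin (m + 1)) ℝ ↥V :=
    basisOfLinearIndependentOfCardEqFinrank hliV (by simp [hdV])
  have hbV : ⇑bV = Fin.cons η₁ fun i => ι (w i) :=
    coe_basisOfLinearIndependentOfCardEqFinrank _ _
  have hXne : ω (Fin.cons η₁ fun i => ι (w i)) ≠ 0 := by
    intro h
    apply hω
    have := ω.eq_smul_basis_det bV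
    rw [hbV, h, zero_smul] at this
    exact this
  -- the curried alternating form on W
  set G : AlternatingMap ℝ ↥W ℝ (Fin m) := (ω.curryLeft η₁).compLinearMap ι with hG
  have hGapp : ∀ v : Fin m → ↥W, G v = ω (Fin.cons η₁ fun i => ι (v i)) := by
    intro v
    simp [hG, Matrix.vecCons, Function.comp]
  have hGdet : G = G w • bw.det := by
    have := G.eq_smul_basis_det bw
    rwa [hbw] at this
  have hA : ω (Fin.cons η₁ fun i => ι (u i)) = ω (Fin.cons η₁ fun i => ι (w i)) * d := by
    rw [← hGapp, ← hGapp, hGdet]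
    simp only [AlternatingMap.smul_apply, smul_eq_mul]
    have hdw : bw.det w = 1 := by rw [← hbw]; exact bw.det_self
    rw [hdw, mul_one, hd]
  -- decompose η₂
  set c : ℝ := f η₂ / f η₁ with hc
  have hcpos : 0 < c := div_pos hη₂ hη₁
  set z : ↥V := η₂ - c • η₁ with hz
  have hfz : f z = 0 := by
    simp only [hz, map_sub, map_smul, smul_eq_mul, hc]
    field_simp
    ring
  have hzspan : z ∈ Submodule.span ℝ (Set.range fun i => ι (u i)) := by
    rw [hspan_u, hkr]
    exact hfz
  have hη₂eq : η₂ = c • η₁ + z := by rw [hz]; abel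
  have hzero : ω (Fin.cons z fun i => ι (u i)) = 0 := by
    apply ω.map_linearDependent
    intro hLI
    rw [linearIndependent_fin_cons] at hLI
    exact hLI.2 hzspan
  have hA₂ : ω (Fin.cons η₂ fun i => ι (u i)) =
      c * (ω (Fin.cons η₁ fun i => ι (w i)) * d) := by
    have e1 : ∀ x : ↥V, ω (Fin.cons x fun i => ι (u i)) = ω.curryLeft x fun i => ι (u i) := by
      intro x; simp [Matrix.vecCons]
    rw [e1, hη₂eq, map_add, map_smul]
    simp only [AlternatingMap.add_apply, AlternatingMap.smul_apply, smul_eq_mul]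
    rw [← e1, ← e1, hzero, hA]
    ring
  rw [hA₂, hY, real_sign_mul, real_sign_mul, real_sign_mul, Real.sign_of_pos hcpos]
  have hsq : Real.sign d * Real.sign d = 1 := by
    rcases hdne.lt_or_gt with h | h
    · rw [Real.sign_of_neg h]; norm_num
    · rw [Real.sign_of_pos h]; norm_num
  linear_combination (-(Real.sign (ω (Fin.cons η₁ fun i => ι (w i))) * Real.sign (ω' w))) * hsq
end
end

section
/- Let E ⊆ ℕ^n be up-closed (if α ∈ E and β ∈ ℕ^n with β_i ≥ α_i for all i, then β ∈ E) and suppose ℕ^n \ E is finite. Define the staircase T = ℝ₊^n \ ⋃_{α ∈ E} (α + ℝ₊^n), where ℝ₊ = [0,∞). Then T is the pairwise disjoint union ⋃_{α ∈ ℕ^n \ E} (α + [0,1)^n) of unit half-open cubes; in particular T is Lebesgue measurable and its Lebesgue measure equals the cardinality of ℕ^n \ E. -/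
open scoped ENNReal

noncomputable section

/-- The half-open unit cube `α + [0,1)^n`. -/
def unitCube {n : ℕ} (α : Fin n → ℕ) : Set (Fin n → ℝ) :=
  {x | ∀ i, (α i : ℝ) ≤ x i ∧ x i < α i + 1}

/-- The staircase `T = ℝ₊^n \ ⋃_{α ∈ E} (α + ℝ₊^n)`. -/
def staircaseOf {n : ℕ} (E : Set (Fin n → ℕ)) : Set (Fin n → ℝ) :=
  {x | ∀ i, 0 ≤ x i} \ ⋃ α ∈ E, {x : Fin n → ℝ | ∀ i, (α i : ℝ) ≤ x i}

theorem statement9 {n : ℕ} (E : Set (Fin n → ℕ))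
    (hup : ∀ α ∈ E, ∀ β : Fin n → ℕ, (∀ i, α i ≤ β i) → β ∈ E)
    (hfin : Eᶜ.Finite) :
    staircaseOf E = (⋃ α ∈ Eᶜ, unitCube α) ∧
    Eᶜ.PairwiseDisjoint unitCube ∧
    MeasurableSet (staircaseOf E) ∧
    MeasureTheory.volume (staircaseOf E) = (Eᶜ.ncard : ℝ≥0∞) := by
  have key : ∀ (a b : ℕ) (t : ℝ), (a : ℝ) ≤ t → t < (b : ℝ) + 1 → a ≤ b := by
    intro a b t h1 h2
    have : (a : ℝ) < (b + 1 : ℕ) := by push_cast; linarith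
    exact Nat.lt_succ_iff.mp (by exact_mod_cast this)
  have hcube : ∀ α : Fin n → ℕ,
      unitCube α = Set.pi Set.univ (fun i => Set.Ico (α i : ℝ) ((α i : ℝ) + 1)) := by
    intro α; ext x; simp [unitCube, Set.mem_pi]
  have heq : staircaseOf E = ⋃ α ∈ Eᶜ, unitCube α := by
    ext x
    constructor
    · rintro ⟨hpos, hnot⟩
      refine Set.mem_iUnion₂.mpr ⟨fun i => ⌊x i⌋₊, ?_, ?_⟩
      · intro hE
        exact hnot (Set.mem_iUnion₂.mpr ⟨_, hE, fun i => Nat.floor_le (hpos i)⟩)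
      · intro i
        exact ⟨Nat.floor_le (hpos i), by exact_mod_cast Nat.lt_floor_add_one (x i)⟩
    · intro hx
      obtain ⟨α, hα, hxα⟩ := Set.mem_iUnion₂.mp hx
      refine ⟨fun i => le_trans (α i).cast_nonneg (hxα i).1, ?_⟩
      intro hmem
      obtain ⟨β, hβ, hxβ⟩ := Set.mem_iUnion₂.mp hmem
      exact hα (hup β hβ α fun i => key _ _ _ (hxβ i) (hxα i).2)
  have hdisj : Eᶜ.PairwiseDisjoint unitCube := by
    intro α hα β hβ hne
    refine Set.disjoint_left.mpr fun x hxa hxb => hne ?_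
    funext i
    exact le_antisymm (key _ _ _ (hxa i).1 (hxb i).2) (key _ _ _ (hxb i).1 (hxa i).2)
  have hmcube : ∀ α : Fin n → ℕ, MeasurableSet (unitCube α) := fun α => by
    rw [hcube]; exact MeasurableSet.univ_pi fun i => measurableSet_Ico
  have hmeas : MeasurableSet (staircaseOf E) := by
    rw [heq]
    exact Set.Finite.measurableSet_biUnion hfin fun α _ => hmcube α
  have hvol1 : ∀ α : Fin n → ℕ, MeasureTheory.volume (unitCube α) = 1 := by
    intro α
    rw [hcube, MeasureTheory.volume_pi_pi]
    simp [Real.volume_Ico]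
  refine ⟨heq, hdisj, hmeas, ?_⟩
  rw [heq]
  have hU : (⋃ α ∈ Eᶜ, unitCube α) = ⋃ α ∈ hfin.toFinset, unitCube α := by
    simp
  rw [hU, MeasureTheory.measure_biUnion_finset
      (by simpa [Set.Finite.coe_toFinset] using hdisj) (fun α _ => hmcube α)]
  simp [hvol1, Set.ncard_eq_toFinset_card Eᶜ hfin]

end
end
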